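/- arXiv:1808.05156 — 10 statements merged into one kernel-verified Lean document; each statement's English description precedes it below -/
import Mathlib

section
/- Let n, T ∈ ℕ with n ≥ 1. For each t < T let A_t be an invertible 2×2 real matrix, and define B_0 = I (the 2×2 identity matrix) and B_{t+1} = A_t·B_t. For each t < T let k_t ∈ {1,…,n} be a coordinate, Δ_t ∈ ℝ a scalar, and D_t ∈ ℝ² a vector. Let y_0, z_0 ∈ ℝⁿ be given, and define y_t, z_t ∈ ℝⁿ recursively by: for each coordinate j, (y_{t+1,j}, z_{t+1,j})ᵀ = A_t·(y_{t,j}, z_{t,j})ᵀ + (Δ_t·D_t if j = k_t, and the zero vector otherwise). Then for every t ≤ T and every coordinate j: (y_{t,j}, z_{t,j})ᵀ = B_t·( (y_{0,j}, z_{0,j})ᵀ + Σ_{l < t, k_l = j} Δ_l·B_{l+1}⁻¹·D_l ). -/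
open scoped BigOperators

/-- The efficient implementation of accelerated coordinate descent produces the same
iterates as the basic iteration. -/
theorem stmt1 (n T : ℕ) (hn : 1 ≤ n)
    (A : ℕ → Matrix (Fin 2) (Fin 2) ℝ) (hA : ∀ t < T, IsUnit (A t))
    (B : ℕ → Matrix (Fin 2) (Fin 2) ℝ)
    (hB0 : B 0 = 1) (hBs : ∀ t < T, B (t + 1) = A t * B t)
    (k : ℕ → Fin n) (Δ : ℕ → ℝ) (D : ℕ → Fin 2 → ℝ)
    (y z : ℕ → Fin n → ℝ)
    (hrec : ∀ t < T, ∀ j : Fin n,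
      ![y (t + 1) j, z (t + 1) j]
        = (A t).mulVec ![y t j, z t j] + (if j = k t then Δ t • D t else 0)) :
    ∀ t ≤ T, ∀ j : Fin n,
      ![y t j, z t j]
        = (B t).mulVec (![y 0 j, z 0 j]
            + ∑ l ∈ (Finset.range t).filter (fun l => k l = j),
                Δ l • (B (l + 1))⁻¹.mulVec (D l)) := by
  have hBu : ∀ t, t ≤ T → IsUnit (B t) := by
    intro t
    induction t with
    | zero => intro _; rw [hB0]; exact isUnit_one
    | succ s ih =>
      intro hs
      rw [hBs s (by omega)]
      exact (hA s (by omega)).mul (ih (by omega))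
  have hinv : ∀ (M : Matrix (Fin 2) (Fin 2) ℝ), IsUnit M → ∀ v : Fin 2 → ℝ,
      M.mulVec (M⁻¹.mulVec v) = v := by
    intro M hM v
    rw [Matrix.mulVec_mulVec, Matrix.mul_nonsing_inv _ ((Matrix.isUnit_iff_isUnit_det M).mp hM),
      Matrix.one_mulVec]
  intro t
  induction t with
  | zero => intro _ j; simp [hB0]
  | succ s ih =>
    intro hs j
    have hsT : s < T := hs
    rw [hrec s hsT j, ih (le_of_lt hsT) j, Finset.range_add_one, Finset.filter_insert]
    by_cases h : k s = j
    · rw [if_pos h, Finset.sum_insert (by simp), if_pos h.symm]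
      rw [Matrix.mulVec_mulVec, ← hBs s hsT, Matrix.mulVec_add, Matrix.mulVec_add,
        Matrix.mulVec_add, Matrix.mulVec_smul, hinv _ (hBu (s + 1) (by omega))]
      abel
    · rw [if_neg h, if_neg (fun hh => h hh.symm), add_zero, Matrix.mulVec_mulVec, ← hBs s hsT]
end

section
/- Let T, q, n ∈ ℕ with T ≥ 1, q ≥ 1, n ≥ 1, let τ ∈ (0,1] and L̄ > 0. For t ∈ {0,…,T−1}, let φ_t, Γ_t, a_t, d_t, e_t be reals with 0 < φ_t, τφ_t < 1, Γ_t > 0, a_t > 0, d_t ≥ 0, e_t ≥ 0. Set W_t := Π_{l=t+1}^{T−1}(1 − τφ_l), Ξ := max_{0 ≤ t ≤ T−1} 216·q²·L̄²·n·φ_t²/Γ_t², and Φ_a := min over t ∈ {0,…,T−1} and s ∈ [t−2q, t+2q] ∩ {0,…,T−1} of (a_s·W_s)/(a_t·W_t). Suppose that for every t ∈ {0,…,T−1}: d_t ≤ (54·q·L̄²·n·φ_t²/Γ_t²)·Σ_{s ∈ [t−2q, t+2q] ∩ {0,…,T−1}, s ≠ t} (d_s + e_s), and suppose Φ_a > Ξ.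 Then: Σ_{t=0}^{T−1} a_t·W_t·d_t ≤ (Ξ/(Φ_a − Ξ))·Σ_{t=0}^{T−1} a_t·W_t·e_t. -/
open scoped BigOperators

/-- The amortization lemma bounding the error terms by the progress terms. -/
theorem stmt2 (T q n : ℕ) (hT : 1 ≤ T) (hq : 1 ≤ q) (hn : 1 ≤ n)
    (τ Lbar : ℝ) (hτ0 : 0 < τ) (hτ1 : τ ≤ 1) (hL : 0 < Lbar)
    (φ Γ a d e : ℕ → ℝ)
    (hφ : ∀ t < T, 0 < φ t) (hτφ : ∀ t < T, τ * φ t < 1)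
    (hΓ : ∀ t < T, 0 < Γ t) (ha : ∀ t < T, 0 < a t)
    (hd0 : ∀ t < T, 0 ≤ d t) (he0 : ∀ t < T, 0 ≤ e t)
    (W : ℕ → ℝ) (hW : ∀ t, W t = ∏ l ∈ Finset.Ico (t + 1) T, (1 - τ * φ l))
    (Ξ Φa : ℝ)
    (hΞ : IsGreatest
      {x : ℝ | ∃ t < T, x = 216 * (q : ℝ) ^ 2 * Lbar ^ 2 * (n : ℝ) * φ t ^ 2 / Γ t ^ 2} Ξ)
    (hΦa : IsLeast
      {x : ℝ | ∃ t < T, ∃ s < T, (t : ℤ) - 2 * q ≤ (s : ℤ) ∧ (s : ℤ) ≤ (t : ℤ) + 2 * q ∧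
          x = (a s * W s) / (a t * W t)} Φa)
    (hd : ∀ t < T, d t ≤ (54 * (q : ℝ) * Lbar ^ 2 * (n : ℝ) * φ t ^ 2 / Γ t ^ 2) *
        ∑ s ∈ (Finset.range T).filter
          (fun s : ℕ => (t : ℤ) - 2 * q ≤ (s : ℤ) ∧ (s : ℤ) ≤ (t : ℤ) + 2 * q ∧ s ≠ t),
          (d s + e s))
    (hΦΞ : Φa > Ξ) :
    ∑ t ∈ Finset.range T, a t * W t * d t
      ≤ (Ξ / (Φa - Ξ)) * ∑ t ∈ Finset.range T, a t * W t * e t := by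
  classical
  set F : ℕ → Finset ℕ := fun t => (Finset.range T).filter
      (fun s : ℕ => (t : ℤ) - 2 * q ≤ (s : ℤ) ∧ (s : ℤ) ≤ (t : ℤ) + 2 * q ∧ s ≠ t) with hF
  have hWpos : ∀ t, 0 < W t := by
    intro t
    rw [hW]
    apply Finset.prod_pos
    intro l hl
    have hl' : l < T := (Finset.mem_Ico.1 hl).2
    have := hτφ l hl'
    linarith
  have hwpos : ∀ t, t < T → 0 < a t * W t := fun t ht => mul_pos (ha t ht) (hWpos t)
  have hΞub : ∀ t, t < T →
      216 * (q : ℝ) ^ 2 * Lbar ^ 2 * (n : ℝ) * φ t ^ 2 / Γ t ^ 2 ≤ Ξ := by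
    intro t ht; exact hΞ.2 ⟨t, ht, rfl⟩
  have hΞpos : 0 < Ξ := by
    have h0 := hΞub 0 hT
    have hφ0 := hφ 0 hT
    have hΓ0 := hΓ 0 hT
    have hq' : (1 : ℝ) ≤ q := by exact_mod_cast hq
    have hn' : (1 : ℝ) ≤ n := by exact_mod_cast hn
    refine lt_of_lt_of_le ?_ h0
    positivity
  have hΦpos : 0 < Φa := lt_trans hΞpos hΦΞ
  have hΦlb : ∀ t, t < T → ∀ s ∈ F t, Φa * (a t * W t) ≤ a s * W s := by
    intro t ht s hs
    simp only [hF, Finset.mem_filter, Finset.mem_range] at hs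
    have h1 : Φa ≤ (a s * W s) / (a t * W t) :=
      hΦa.2 ⟨t, ht, s, hs.1, hs.2.1, hs.2.2.1, rfl⟩
    have hwt := hwpos t ht
    exact (le_div_iff₀ hwt).1 h1
  have hge0 : ∀ s, s < T → 0 ≤ a s * W s * (d s + e s) := by
    intro s hs
    have := hd0 s hs; have := he0 s hs
    have := (hwpos s hs).le
    positivity
  -- per-t key inequality
  have key1 : ∀ t, t < T → 4 * (q : ℝ) * (Φa * (a t * W t * d t))
      ≤ Ξ * ∑ s ∈ F t, a s * W s * (d s + e s) := by
    intro t ht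
    set c : ℝ := 54 * (q : ℝ) * Lbar ^ 2 * (n : ℝ) * φ t ^ 2 / Γ t ^ 2 with hc
    have hc0 : 0 ≤ c := by
      have := hφ t ht; have := hΓ t ht
      positivity
    have hdt := hd t ht
    have hwt := hwpos t ht
    have step1 : Φa * (a t * W t * d t)
        ≤ c * ∑ s ∈ F t, (Φa * (a t * W t)) * (d s + e s) := by
      have h1 : Φa * (a t * W t) * d t ≤ Φa * (a t * W t) * (c * ∑ s ∈ F t, (d s + e s)) :=
        mul_le_mul_of_nonneg_left hdt (by positivity)
      calc Φa * (a t * W t * d t) = Φa * (a t * W t) * d t := by ring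
        _ ≤ Φa * (a t * W t) * (c * ∑ s ∈ F t, (d s + e s)) := h1
        _ = c * (Φa * (a t * W t) * ∑ s ∈ F t, (d s + e s)) := by ring
        _ = c * ∑ s ∈ F t, (Φa * (a t * W t)) * (d s + e s) := by
            rw [Finset.mul_sum]
    have step2 : ∑ s ∈ F t, (Φa * (a t * W t)) * (d s + e s)
        ≤ ∑ s ∈ F t, a s * W s * (d s + e s) := by
      apply Finset.sum_le_sum
      intro s hs
      have hsT : s < T := Finset.mem_range.1 (Finset.mem_filter.1 hs).1
      have hde : 0 ≤ d s + e s := add_nonneg (hd0 s hsT) (he0 s hsT)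
      exact mul_le_mul_of_nonneg_right (hΦlb t ht s hs) hde
    have hsum0 : 0 ≤ ∑ s ∈ F t, a s * W s * (d s + e s) := by
      apply Finset.sum_nonneg
      intro s hs
      exact hge0 s (Finset.mem_range.1 (Finset.mem_filter.1 hs).1)
    have h4c : 4 * (q : ℝ) * c ≤ Ξ := by
      have := hΞub t ht
      have : 4 * (q : ℝ) * c = 216 * (q : ℝ) ^ 2 * Lbar ^ 2 * (n : ℝ) * φ t ^ 2 / Γ t ^ 2 := by
        rw [hc]; ring
      linarith [hΞub t ht]
    calc 4 * (q : ℝ) * (Φa * (a t * W t * d t))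
        ≤ 4 * (q : ℝ) * (c * ∑ s ∈ F t, a s * W s * (d s + e s)) := by
          have hq0 : (0:ℝ) ≤ 4 * (q : ℝ) := by positivity
          have := le_trans step1 (mul_le_mul_of_nonneg_left step2 hc0)
          exact mul_le_mul_of_nonneg_left this hq0
      _ = (4 * (q : ℝ) * c) * ∑ s ∈ F t, a s * W s * (d s + e s) := by ring
      _ ≤ Ξ * ∑ s ∈ F t, a s * W s * (d s + e s) :=
          mul_le_mul_of_nonneg_right h4c hsum0
  -- sum over t and swap
  have hswap : ∑ t ∈ Finset.range T, ∑ s ∈ F t, a s * W s * (d s + e s)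
      = ∑ s ∈ Finset.range T, ∑ t ∈ F s, a s * W s * (d s + e s) := by
    apply Finset.sum_comm'
    intro x y
    simp only [hF, Finset.mem_filter, Finset.mem_range]
    omega
  have hcard : ∀ s, (F s).card ≤ 4 * q := by
    intro s
    have hsub : F s ⊆ (Finset.Ico (s - 2 * q) (s + 2 * q + 1)).erase s := by
      intro t ht
      simp only [hF, Finset.mem_filter, Finset.mem_range] at ht
      obtain ⟨htT, h1, h2, h3⟩ := ht
      rw [Finset.mem_erase, Finset.mem_Ico]
      refine ⟨h3, ?_, ?_⟩ <;> omega
    have h1 := Finset.card_le_card hsub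
    have hmem : s ∈ Finset.Ico (s - 2 * q) (s + 2 * q + 1) := by
      rw [Finset.mem_Ico]; omega
    rw [Finset.card_erase_of_mem hmem, Nat.card_Ico] at h1
    omega
  have hinner : ∀ s, s < T → ∑ t ∈ F s, a s * W s * (d s + e s)
      ≤ 4 * (q : ℝ) * (a s * W s * (d s + e s)) := by
    intro s hs
    rw [Finset.sum_const, nsmul_eq_mul]
    apply mul_le_mul_of_nonneg_right _ (hge0 s hs)
    have := hcard s
    calc ((F s).card : ℝ) ≤ ((4 * q : ℕ) : ℝ) := by exact_mod_cast this
      _ = 4 * (q : ℝ) := by push_cast; ring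
  -- main summed inequality
  have main : 4 * (q : ℝ) * (Φa * ∑ t ∈ Finset.range T, a t * W t * d t)
      ≤ 4 * (q : ℝ) * (Ξ * ∑ s ∈ Finset.range T, a s * W s * (d s + e s)) := by
    calc 4 * (q : ℝ) * (Φa * ∑ t ∈ Finset.range T, a t * W t * d t)
        = ∑ t ∈ Finset.range T, 4 * (q : ℝ) * (Φa * (a t * W t * d t)) := by
          rw [Finset.mul_sum, Finset.mul_sum]
      _ ≤ ∑ t ∈ Finset.range T, Ξ * ∑ s ∈ F t, a s * W s * (d s + e s) :=
          Finset.sum_le_sum fun t ht => key1 t (Finset.mem_range.1 ht)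
      _ = Ξ * ∑ s ∈ Finset.range T, ∑ t ∈ F s, a s * W s * (d s + e s) := by
          rw [← Finset.mul_sum, hswap]
      _ ≤ Ξ * ∑ s ∈ Finset.range T, 4 * (q : ℝ) * (a s * W s * (d s + e s)) := by
          apply mul_le_mul_of_nonneg_left _ hΞpos.le
          exact Finset.sum_le_sum fun s hs => hinner s (Finset.mem_range.1 hs)
      _ = 4 * (q : ℝ) * (Ξ * ∑ s ∈ Finset.range T, a s * W s * (d s + e s)) := by
          rw [Finset.mul_sum]; rw [Finset.mul_sum, Finset.mul_sum]
          congr 1; ext s; ring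
  have hq4 : (0:ℝ) < 4 * (q : ℝ) := by
    have : (1:ℝ) ≤ q := by exact_mod_cast hq
    linarith
  have main2 : Φa * ∑ t ∈ Finset.range T, a t * W t * d t
      ≤ Ξ * ∑ s ∈ Finset.range T, a s * W s * (d s + e s) :=
    le_of_mul_le_mul_left main hq4
  have hsplit : ∑ s ∈ Finset.range T, a s * W s * (d s + e s)
      = (∑ t ∈ Finset.range T, a t * W t * d t) + ∑ t ∈ Finset.range T, a t * W t * e t := by
    rw [← Finset.sum_add_distrib]
    congr 1; ext s; ring
  rw [hsplit] at main2
  have hsub : 0 < Φa - Ξ := sub_pos.2 hΦΞ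
  rw [div_mul_eq_mul_div, le_div_iff₀ hsub]
  nlinarith [main2]
end

section
/- Let n, q, T ∈ ℕ with q ≥ 1 and n ≥ 50q, let τ ∈ (0,1], Υ > 0, L̄ > 0, and c > 0. Let φ : ℕ → ℝ be a nonincreasing sequence with 0 < φ_l ≤ 1/n and φ_{l+1} ≥ (1 − 1/(2n))·φ_l for all l, and set Γ_l := c·√(n·φ_l). For 0 ≤ t ≤ T define W_t := Π_{l=t+1}^{T}(1 − τφ_l), b_t := ((3/Υ + 2nφ_t)/(2Γ_t))·540·q²·L̄²·n·φ_t², and c_t := 12·Γ_t·φ_t. Then: (i) for all 0 ≤ s,t ≤ T with |s−t| ≤ 4q, b_s·W_s ≥ (4/5)·b_t·W_t; (ii) for all 0 ≤ s,t ≤ T with |s−t| ≤ 2q, c_s·W_s ≥ (4/5)·c_t·W_t; and (iii) for all integers s,t ≥ 0 with t − 3q ≤ s ≤ t + 2q, φ_s²·Γ_t² ≤ (6/5)·φ_t²·Γ_s². -/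
open scoped BigOperators

set_option maxHeartbeats 2000000 in
/-- Lower bounds on Φ_b and Φ_c and upper bound on ξ when √(φ_t)/Γ_t is constant
and n ≥ 50q. -/
theorem stmt3 (n q T : ℕ) (hq : 1 ≤ q) (hn : 50 * q ≤ n)
    (τ Υ Lbar c : ℝ) (hτ0 : 0 < τ) (hτ1 : τ ≤ 1) (hΥ : 0 < Υ) (hL : 0 < Lbar) (hc : 0 < c)
    (φ : ℕ → ℝ) (hmono : ∀ l, φ (l + 1) ≤ φ l)
    (hpos : ∀ l, 0 < φ l) (hub : ∀ l, φ l ≤ 1 / (n : ℝ))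
    (hratio : ∀ l, φ (l + 1) ≥ (1 - 1 / (2 * (n : ℝ))) * φ l)
    (Γ : ℕ → ℝ) (hΓ : ∀ l, Γ l = c * Real.sqrt ((n : ℝ) * φ l))
    (W b cs : ℕ → ℝ)
    (hW : ∀ t, W t = ∏ l ∈ Finset.Ico (t + 1) (T + 1), (1 - τ * φ l))
    (hb : ∀ t, b t = ((3 / Υ + 2 * (n : ℝ) * φ t) / (2 * Γ t)) *
        (540 * (q : ℝ) ^ 2 * Lbar ^ 2 * (n : ℝ) * φ t ^ 2))
    (hcs : ∀ t, cs t = 12 * Γ t * φ t) :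
    (∀ s t : ℕ, s ≤ T → t ≤ T → |(s : ℤ) - (t : ℤ)| ≤ 4 * q →
        (4 / 5) * (b t * W t) ≤ b s * W s) ∧
    (∀ s t : ℕ, s ≤ T → t ≤ T → |(s : ℤ) - (t : ℤ)| ≤ 2 * q →
        (4 / 5) * (cs t * W t) ≤ cs s * W s) ∧
    (∀ s t : ℕ, (t : ℤ) - 3 * q ≤ (s : ℤ) → (s : ℤ) ≤ (t : ℤ) + 2 * q →
        φ s ^ 2 * Γ t ^ 2 ≤ (6 / 5) * (φ t ^ 2 * Γ s ^ 2)) := by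
  have hn50 : 50 ≤ n := le_trans (by omega) (le_trans (Nat.mul_le_mul_left 50 hq) hn)
  have hnR : (50 : ℝ) ≤ (n : ℝ) := by exact_mod_cast hn50
  have hn0 : (0 : ℝ) < n := by linarith
  have hqR : (1 : ℝ) ≤ (q : ℝ) := by exact_mod_cast hq
  have hq0 : (0 : ℝ) < (q : ℝ) := by linarith
  have hnq : 50 * (q : ℝ) ≤ (n : ℝ) := by exact_mod_cast hn
  have hanti : ∀ s t : ℕ, s ≤ t → φ t ≤ φ s := fun s t h =>
    antitone_nat_of_succ_le hmono h
  have hΓsq : ∀ l, (Γ l) ^ 2 = c ^ 2 * ((n : ℝ) * φ l) := by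
    intro l
    have := hpos l
    rw [hΓ l, mul_pow, Real.sq_sqrt (by positivity)]
  have hΓpos : ∀ l, 0 < Γ l := by
    intro l
    rw [hΓ l]
    exact mul_pos hc (Real.sqrt_pos.mpr (by have := hpos l; positivity))
  -- iterated lower ratio bound
  have hkey : ∀ t k : ℕ, (1 - (k : ℝ) / (2 * n)) * φ t ≤ φ (t + k) := by
    intro t k
    have h3 : (0 : ℝ) ≤ 1 - 1 / (2 * (n : ℝ)) := by
      rw [sub_nonneg, div_le_one (by linarith)]
      linarith
    have h1 : (1 - 1 / (2 * (n : ℝ))) ^ k * φ t ≤ φ (t + k) := by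
      induction k with
      | zero => simp
      | succ k ih =>
        calc (1 - 1 / (2 * (n : ℝ))) ^ (k + 1) * φ t
            = (1 - 1 / (2 * n)) * ((1 - 1 / (2 * n)) ^ k * φ t) := by ring
          _ ≤ (1 - 1 / (2 * n)) * φ (t + k) := mul_le_mul_of_nonneg_left ih h3
          _ ≤ φ (t + k + 1) := hratio (t + k)
    refine le_trans (mul_le_mul_of_nonneg_right ?_ (hpos t).le) h1
    have h := one_add_mul_le_pow (a := -(1 / (2 * (n : ℝ)))) (by nlinarith) k
    calc 1 - (k : ℝ) / (2 * n) = 1 + (k : ℝ) * (-(1 / (2 * n))) := by ring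
      _ ≤ (1 + -(1 / (2 * (n : ℝ)))) ^ k := h
      _ = (1 - 1 / (2 * (n : ℝ))) ^ k := by ring
  -- window bound helper
  have hwin : ∀ (t k : ℕ) (r : ℝ), (k : ℝ) ≤ 2 * n * (1 - r) → 0 ≤ r →
      r * φ t ≤ φ (t + k) := by
    intro t k r h hr
    refine le_trans (mul_le_mul_of_nonneg_right ?_ (hpos t).le) (hkey t k)
    have h2 : (k : ℝ) / (2 * n) ≤ 1 - r := by
      rw [div_le_iff₀ (by linarith)]
      linarith
    linarith
  -- factor bounds for W
  have h1n : 1 / (n : ℝ) ≤ 1 / 50 := by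
    rw [div_le_div_iff₀ hn0 (by norm_num)]
    linarith
  have hfac1 : ∀ l, 1 - 1 / (n : ℝ) ≤ 1 - τ * φ l := by
    intro l
    have h1 : τ * φ l ≤ φ l := by nlinarith [hpos l]
    have := hub l
    linarith
  have hfacpos : ∀ l, 0 < 1 - τ * φ l := by
    intro l
    have := hfac1 l
    linarith
  have hfacle : ∀ l, 1 - τ * φ l ≤ 1 := by
    intro l
    nlinarith [hpos l]
  have hWpos : ∀ t, 0 < W t := by
    intro t
    rw [hW t]
    exact Finset.prod_pos fun l _ => hfacpos l
  have hWsplit : ∀ s t : ℕ, s ≤ t → t ≤ T →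
      W s = (∏ l ∈ Finset.Ico (s + 1) (t + 1), (1 - τ * φ l)) * W t := by
    intro s t hst htT
    rw [hW s, hW t, Finset.prod_Ico_consecutive _ (by omega) (by omega)]
  have hWmono : ∀ s t : ℕ, s ≤ t → t ≤ T → W s ≤ W t := by
    intro s t hst htT
    rw [hWsplit s t hst htT]
    have hP : (∏ l ∈ Finset.Ico (s + 1) (t + 1), (1 - τ * φ l)) ≤ 1 :=
      Finset.prod_le_one (fun l _ => (hfacpos l).le) (fun l _ => hfacle l)
    nlinarith [hWpos t]
  have hWratio : ∀ s t : ℕ, s ≤ t → t ≤ T →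
      (1 - ((t - s : ℕ) : ℝ) / n) * W t ≤ W s := by
    intro s t hst htT
    rw [hWsplit s t hst htT]
    have h1 : (0:ℝ) ≤ 1 - 1 / (n : ℝ) := by linarith
    have hP : (1 - 1 / (n : ℝ)) ^ (t - s) ≤
        ∏ l ∈ Finset.Ico (s + 1) (t + 1), (1 - τ * φ l) := by
      have h2 := Finset.prod_le_prod (s := Finset.Ico (s + 1) (t + 1))
        (f := fun _ => 1 - 1 / (n : ℝ)) (g := fun l => 1 - τ * φ l)
        (fun l _ => h1) (fun l _ => hfac1 l)
      rwa [Finset.prod_const, Nat.card_Ico, show t + 1 - (s + 1) = t - s from by omega] at h2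
    have hBer : 1 - ((t - s : ℕ) : ℝ) / n ≤ (1 - 1 / (n : ℝ)) ^ (t - s) := by
      have h := one_add_mul_le_pow (a := -(1 / (n : ℝ))) (by nlinarith) (t - s)
      calc 1 - ((t - s : ℕ) : ℝ) / n = 1 + ((t - s : ℕ) : ℝ) * (-(1 / n)) := by ring
        _ ≤ (1 + -(1 / (n : ℝ))) ^ (t - s) := h
        _ = (1 - 1 / (n : ℝ)) ^ (t - s) := by ring
    exact mul_le_mul_of_nonneg_right (le_trans hBer hP) (hWpos t).le
  -- squared formulas
  have hc2n : (0 : ℝ) < 4 * c ^ 2 * n := by positivity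
  have hbsq : ∀ l, (b l) ^ 2 * (4 * c ^ 2 * n) =
      (3 / Υ + 2 * (n : ℝ) * φ l) ^ 2 * (540 * (q : ℝ) ^ 2 * Lbar ^ 2 * n) ^ 2 * φ l ^ 3 := by
    intro l
    have hφl := hpos l
    have hsp : 0 < Real.sqrt ((n : ℝ) * φ l) := Real.sqrt_pos.mpr (by positivity)
    rw [hb l, hΓ l]
    field_simp
    ring_nf
    rw [Real.sq_sqrt (by positivity : (0:ℝ) ≤ (n:ℝ) * φ l)]
  have hcssq : ∀ l, (cs l) ^ 2 = 144 * c ^ 2 * n * φ l ^ 3 := by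
    intro l
    have hφl := hpos l
    rw [hcs l, hΓ l, mul_pow, mul_pow, mul_pow, Real.sq_sqrt (by positivity)]
    ring
  have hPpos : ∀ l, 0 < 3 / Υ + 2 * (n : ℝ) * φ l := by
    intro l
    have h1 : 0 < 3 / Υ := by positivity
    have h2 : 0 < 2 * (n : ℝ) * φ l := by
      have := hpos l
      positivity
    linarith
  have hbpos : ∀ l, 0 < b l := by
    intro l
    rw [hb l]
    exact mul_pos (div_pos (hPpos l) (by linarith [hΓpos l]))
      (mul_pos (mul_pos (mul_pos (mul_pos (by norm_num) (pow_pos hq0 2))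
        (pow_pos hL 2)) hn0) (pow_pos (hpos l) 2))
  have hcspos : ∀ l, 0 < cs l := by
    intro l
    rw [hcs l]
    exact mul_pos (mul_pos (by norm_num) (hΓpos l)) (hpos l)
  have hsqle : ∀ x y : ℝ, 0 ≤ x → 0 ≤ y → x ^ 2 ≤ y ^ 2 → x ≤ y := by
    intro x y hx hy h
    nlinarith
  refine ⟨?_, ?_, ?_⟩
  · -- part (i)
    intro s t hsT htT habs
    rw [abs_le] at habs
    rcases le_or_gt t s with h | h
    · -- s ≥ t
      have hk : s - t ≤ 4 * q := by omega
      have hkR : ((s - t : ℕ) : ℝ) ≤ 4 * q := by exact_mod_cast hk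
      have hw : (24 / 25) * φ t ≤ φ s := by
        have h2 := hwin t (s - t) (24 / 25) (by norm_num; linarith) (by norm_num)
        rwa [show t + (s - t) = s from by omega] at h2
      have hbb : 4 / 5 * b t ≤ b s := by
        apply hsqle _ _ (by linarith [hbpos t]) (hbpos s).le
        apply le_of_mul_le_mul_right ?_ hc2n
        have he : (4 / 5 * b t) ^ 2 * (4 * c ^ 2 * n) =
            16 / 25 * ((b t) ^ 2 * (4 * c ^ 2 * n)) := by ring
        rw [he, hbsq t, hbsq s]
        have hP : (24 / 25) * (3 / Υ + 2 * (n : ℝ) * φ t) ≤ 3 / Υ + 2 * (n : ℝ) * φ s := by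
          have h3 : 0 < 3 / Υ := by positivity
          have h4 := mul_le_mul_of_nonneg_left hw (show (0:ℝ) ≤ 2 * n by linarith)
          linarith
        have hP2 : ((24 / 25) * (3 / Υ + 2 * (n : ℝ) * φ t)) ^ 2 ≤
            (3 / Υ + 2 * (n : ℝ) * φ s) ^ 2 :=
          pow_le_pow_left₀ (by linarith [hPpos t]) hP 2
        have hφ3 : ((24 / 25) * φ t) ^ 3 ≤ φ s ^ 3 :=
          pow_le_pow_left₀ (by linarith [hpos t]) hw 3
        have hcomb := mul_le_mul hP2 hφ3
          (pow_nonneg (by linarith [hpos t]) 3) (sq_nonneg _)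
        have h5 := mul_le_mul_of_nonneg_right hcomb
          (sq_nonneg (540 * (q : ℝ) ^ 2 * Lbar ^ 2 * n))
        have h6 : (0:ℝ) ≤ (3 / Υ + 2 * (n : ℝ) * φ t) ^ 2 *
            (540 * (q : ℝ) ^ 2 * Lbar ^ 2 * n) ^ 2 * φ t ^ 3 :=
          mul_nonneg (mul_nonneg (sq_nonneg _) (sq_nonneg _)) (pow_nonneg (hpos t).le 3)
        nlinarith [h5, h6]
      have hWst := hWmono t s h hsT
      have h7 := mul_le_mul hbb hWst (hWpos t).le (hbpos s).le
      nlinarith [h7]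
    · -- s < t
      have hk : t - s ≤ 4 * q := by omega
      have hkR : ((t - s : ℕ) : ℝ) ≤ 4 * q := by exact_mod_cast hk
      have hw : (4 / 5) * W t ≤ W s := by
        have hr := hWratio s t h.le htT
        have h2 : ((t - s : ℕ) : ℝ) / n ≤ 1 / 5 := by
          rw [div_le_iff₀ hn0]
          linarith
        nlinarith [hWpos t]
      have hφ : φ t ≤ φ s := hanti s t h.le
      have hbb : b t ≤ b s := by
        apply hsqle _ _ (hbpos t).le (hbpos s).le
        apply le_of_mul_le_mul_right ?_ hc2n
        rw [hbsq t, hbsq s]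
        have hP : 3 / Υ + 2 * (n : ℝ) * φ t ≤ 3 / Υ + 2 * (n : ℝ) * φ s := by
          have h4 := mul_le_mul_of_nonneg_left hφ (show (0:ℝ) ≤ 2 * n by linarith)
          linarith
        exact mul_le_mul
          (mul_le_mul (pow_le_pow_left₀ (hPpos t).le hP 2) le_rfl (sq_nonneg _)
            (sq_nonneg _))
          (pow_le_pow_left₀ (hpos t).le hφ 3) (pow_nonneg (hpos t).le 3)
          (mul_nonneg (sq_nonneg _) (sq_nonneg _))
      have h7 := mul_le_mul hbb hw (by linarith [hWpos t]) (hbpos s).le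
      nlinarith [h7]
  · -- part (ii)
    intro s t hsT htT habs
    rw [abs_le] at habs
    rcases le_or_gt t s with h | h
    · have hk : s - t ≤ 2 * q := by omega
      have hkR : ((s - t : ℕ) : ℝ) ≤ 2 * q := by exact_mod_cast hk
      have hw : (49 / 50) * φ t ≤ φ s := by
        have h2 := hwin t (s - t) (49 / 50) (by norm_num; linarith) (by norm_num)
        rwa [show t + (s - t) = s from by omega] at h2
      have hbb : 4 / 5 * cs t ≤ cs s := by
        apply hsqle _ _ (by linarith [hcspos t]) (hcspos s).le
        have he : (4 / 5 * cs t) ^ 2 = 16 / 25 * (cs t) ^ 2 := by ring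
        rw [he, hcssq t, hcssq s]
        have hφ3 : ((49 / 50) * φ t) ^ 3 ≤ φ s ^ 3 :=
          pow_le_pow_left₀ (by linarith [hpos t]) hw 3
        have hnn : (0:ℝ) ≤ 144 * c ^ 2 * n := by positivity
        have h5 := mul_le_mul_of_nonneg_left hφ3 hnn
        have h6 : (0:ℝ) ≤ 144 * c ^ 2 * n * φ t ^ 3 :=
          mul_nonneg hnn (pow_nonneg (hpos t).le 3)
        nlinarith [h5, h6]
      have hWst := hWmono t s h hsT
      have h7 := mul_le_mul hbb hWst (hWpos t).le (hcspos s).le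
      nlinarith [h7]
    · have hk : t - s ≤ 2 * q := by omega
      have hkR : ((t - s : ℕ) : ℝ) ≤ 2 * q := by exact_mod_cast hk
      have hw : (4 / 5) * W t ≤ W s := by
        have hr := hWratio s t h.le htT
        have h2 : ((t - s : ℕ) : ℝ) / n ≤ 1 / 5 := by
          rw [div_le_iff₀ hn0]
          linarith
        nlinarith [hWpos t]
      have hφ : φ t ≤ φ s := hanti s t h.le
      have hbb : cs t ≤ cs s := by
        apply hsqle _ _ (hcspos t).le (hcspos s).le
        rw [hcssq t, hcssq s]
        have hφ3 : φ t ^ 3 ≤ φ s ^ 3 := pow_le_pow_left₀ (hpos t).le hφ 3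
        have hnn : (0:ℝ) ≤ 144 * c ^ 2 * n := by positivity
        have h5 := mul_le_mul_of_nonneg_left hφ3 hnn
        linarith [h5]
      have h7 := mul_le_mul hbb hw (by linarith [hWpos t]) (hcspos s).le
      nlinarith [h7]
  · -- part (iii)
    intro s t h1 h2
    have hst : φ s ≤ 6 / 5 * φ t := by
      rcases le_or_gt t s with h | h
      · linarith [hanti t s h, hpos t]
      · have hk : t - s ≤ 3 * q := by omega
        have hkR : ((t - s : ℕ) : ℝ) ≤ 3 * q := by exact_mod_cast hk
        have hw := hwin s (t - s) (97 / 100) (by norm_num; linarith) (by norm_num)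
        rw [show s + (t - s) = t from by omega] at hw
        linarith [hpos s]
    rw [hΓsq s, hΓsq t]
    have hprod : (0 : ℝ) ≤ c ^ 2 * n * (φ s * φ t) := by
      have := hpos s
      have := hpos t
      positivity
    have h5 := mul_le_mul_of_nonneg_right hst hprod
    nlinarith [h5]
end

section
/- Let n, q ∈ ℕ with n ≥ 10, 1 ≤ q, and q ≤ min{(n−8)/12, (2n−4)/10, n/20}. Let φ ∈ ℝ with 0 < φ ≤ 1/(n+1), and let A be the 2×2 real matrix with first row ((1+φ²)/(1+φ), 1 − (1+φ²)/(1+φ)) and second row (φ, 1−φ). Then A is invertible, and for all integers s, t ≥ 0 with |s − t| ≤ 2q, writing M := A^{t−s−1} (an integer power of the invertible matrix A) and c := (n+1)φ/(1+φ), the following hold: |M₁₁·c + M₁₂| ≤ (3/2)·n·φ, |M₁₁·c| ≤ (3/2)·n·φ, |M₁₂| ≤ (3/2)·n·φ, and |M₂₁·c + M₂₂| ≤ 2. -/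
open Matrix

-- Bernoulli-type bounds on powers of μ
private lemma powBounds (N φ μ : ℝ) (hN : 10 ≤ N) (hφ0 : 0 < φ)
    (hφN : φ * (N + 1) ≤ 1) (hμ : μ = (1 - φ) / (1 + φ)) :
    ∀ m : ℕ, (m : ℝ) ≤ N / 10 + 1 →
      1 - 2 * m * φ ≤ μ ^ m ∧ μ ^ m ≤ 1 ∧ (μ ^ m)⁻¹ ≤ 1 + 22 / 7 * m * φ
        ∧ 2 * m * φ ≤ 4 / 11 := by
  have h1φ : (0:ℝ) < 1 + φ := by linarith
  have hφ1 : φ < 1 := by nlinarith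
  have hμ0 : 0 < μ := by rw [hμ]; exact div_pos (by linarith) h1φ
  have hμ1 : μ ≤ 1 := by rw [hμ, div_le_one h1φ]; linarith
  have h1mμ : 1 - μ ≤ 2 * φ := by
    have : μ * (1 + φ) = 1 - φ := by rw [hμ]; field_simp
    nlinarith
  intro m hm
  have hm0 : (0:ℝ) ≤ m := Nat.cast_nonneg m
  have hx : 2 * m * φ ≤ 4 / 11 := by nlinarith
  have hbern : 1 - m * (1 - μ) ≤ μ ^ m := by
    have := one_add_mul_le_pow (show (-2:ℝ) ≤ -(1 - μ) by linarith) m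
    have e : 1 + (-(1-μ)) = μ := by ring
    rw [e] at this; linarith
  have hlow : 1 - 2 * m * φ ≤ μ ^ m := by nlinarith
  have hple : μ ^ m ≤ 1 := pow_le_one₀ hμ0.le hμ1
  refine ⟨hlow, hple, ?_, hx⟩
  have hpos : 0 < μ ^ m := pow_pos hμ0 m
  rw [inv_eq_one_div, div_le_iff₀ hpos]
  nlinarith

private lemma zpowBounds (N φ μ : ℝ) (hN : 10 ≤ N) (hφ0 : 0 < φ)
    (hφN : φ * (N + 1) ≤ 1) (hμ : μ = (1 - φ) / (1 + φ)) :
    ∀ j : ℤ, |(j : ℝ)| ≤ N / 10 + 1 →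
      0 < μ ^ j ∧ μ ^ j ≤ 11 / 7 ∧ |μ ^ j - 1| ≤ 22 / 7 * |(j : ℝ)| * φ
        ∧ (0 ≤ j → μ ^ j ≤ 1) ∧ (j ≤ 0 → 1 ≤ μ ^ j) := by
  have h1φ : (0:ℝ) < 1 + φ := by linarith
  have hμ0 : 0 < μ := by rw [hμ]; exact div_pos (by nlinarith) h1φ
  intro j hj
  rcases le_or_gt 0 j with h | h
  · obtain ⟨m, rfl⟩ := Int.eq_ofNat_of_zero_le h
    have habs : |(((m:ℤ)) : ℝ)| = (m : ℝ) := by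
      push_cast; exact abs_of_nonneg (Nat.cast_nonneg m)
    rw [habs] at hj
    obtain ⟨h1, h2, h3, h4⟩ := powBounds N φ μ hN hφ0 hφN hμ m hj
    rw [zpow_natCast, habs]
    refine ⟨pow_pos hμ0 m, by linarith, ?_, fun _ => h2, ?_⟩
    · rw [abs_of_nonpos (by linarith)]
      nlinarith [Nat.cast_nonneg (α := ℝ) m, hφ0.le]
    · intro hle
      have : m = 0 := by omega
      subst this; simp
  · obtain ⟨m, rfl⟩ : ∃ m : ℕ, j = -(m : ℤ) := ⟨j.natAbs, by omega⟩
    push_cast at hj ⊢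
    rw [abs_neg, abs_of_nonneg (Nat.cast_nonneg m)] at hj
    rw [abs_neg, Nat.abs_cast]
    obtain ⟨h1, h2, h3, h4⟩ := powBounds N φ μ hN hφ0 hφN hμ m hj
    rw [_root_.zpow_neg, zpow_natCast]
    have hpos : 0 < μ ^ m := pow_pos hμ0 m
    have hinv1 : 1 ≤ (μ ^ m)⁻¹ := by
      rw [le_inv_comm₀ one_pos hpos]; simpa using h2
    refine ⟨by positivity, by nlinarith, ?_, ?_, fun _ => hinv1⟩
    · rw [abs_of_nonneg (by linarith)]; linarith
    · intro hle
      have : m = 0 := by omega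
      subst this; simp

private lemma estE2 (N φ Q : ℝ) (hN : 10 ≤ N) (hφ0 : 0 < φ) (hφN : φ * (N + 1) ≤ 1)
    (hQ0 : 0 < Q) (hQ7 : Q ≤ 11 / 7) :
    |(N + 1) * φ / 2 * (1 + Q)| ≤ 3 / 2 * N * φ := by
  rw [abs_of_nonneg (by positivity)]
  nlinarith [mul_nonneg (mul_nonneg (show (0:ℝ) ≤ N + 1 by linarith) hφ0.le)
      (show (0:ℝ) ≤ 11 / 7 - Q by linarith),
    mul_nonneg hφ0.le (show (0:ℝ) ≤ 3 / 2 * N - 9 / 7 * (N + 1) by linarith)]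

private lemma estE3 (N φ μ P Q : ℝ) (hN : 10 ≤ N) (hφ0 : 0 < φ) (hφ1 : φ < 1)
    (hμrel : μ * (1 + φ) = 1 - φ) (hPQ : Q = P * μ)
    (hPd : |P - 1| ≤ 22 / 35 * N * φ) :
    |(1 + φ) / 2 * (μ - Q)| ≤ 3 / 2 * N * φ := by
  have heq : (1 + φ) / 2 * (μ - Q) = (1 - φ) * (1 - P) / 2 := by
    rw [hPQ]; linear_combination (1 - P) / 2 * hμrel
  rw [heq]
  obtain ⟨h1, h2⟩ := abs_le.1 hPd
  rw [abs_le]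
  constructor <;>
    nlinarith [mul_nonneg (show (0:ℝ) ≤ 1 - φ by linarith)
        (show (0:ℝ) ≤ 22 / 35 * N * φ - (1 - P) by linarith),
      mul_nonneg (show (0:ℝ) ≤ 1 - φ by linarith)
        (show (0:ℝ) ≤ 22 / 35 * N * φ + (1 - P) by linarith),
      mul_nonneg hφ0.le (show (0:ℝ) ≤ 22 / 35 * N * φ by nlinarith)]

private lemma estE1 (N φ μ P Q : ℝ) (hN : 10 ≤ N) (hφ0 : 0 < φ) (hφ1 : φ < 1)
    (hφN : φ * (N + 1) ≤ 1)
    (hμrel : μ * (1 + φ) = 1 - φ) (hPQ : Q = P * μ)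
    (hQ0 : 0 < Q) (hQ7 : Q ≤ 11 / 7)
    (hPd : |P - 1| ≤ 22 / 35 * N * φ)
    (hcase : (P ≤ 1 ∧ Q ≤ 1) ∨ 1 ≤ P) :
    |(N + 1) * φ / 2 * (1 + Q) + (1 + φ) / 2 * (μ - Q)| ≤ 3 / 2 * N * φ := by
  have heq : (1 + φ) / 2 * (μ - Q) = (1 - φ) * (1 - P) / 2 := by
    rw [hPQ]; linear_combination (1 - P) / 2 * hμrel
  rw [heq]
  obtain ⟨h1, h2⟩ := abs_le.1 hPd
  rw [abs_le]
  rcases hcase with ⟨hP1, hQ1⟩ | hP1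
  · constructor
    · nlinarith [mul_nonneg (mul_nonneg (show (0:ℝ) ≤ N + 1 by linarith) hφ0.le) hQ0.le,
        mul_nonneg (show (0:ℝ) ≤ 1 - φ by linarith) (show (0:ℝ) ≤ 1 - P by linarith)]
    · nlinarith [mul_nonneg (mul_nonneg (show (0:ℝ) ≤ N + 1 by linarith) hφ0.le)
          (show (0:ℝ) ≤ 1 - Q by linarith),
        mul_nonneg hφ0.le (show (0:ℝ) ≤ 1 - P by linarith),
        mul_nonneg hφ0.le (show (0:ℝ) ≤ 22 / 35 * N * φ - (1 - P) by linarith)]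
  · constructor
    · nlinarith [mul_nonneg (mul_nonneg (show (0:ℝ) ≤ N + 1 by linarith) hφ0.le) hQ0.le,
        mul_nonneg (show (0:ℝ) ≤ 1 - φ by linarith)
          (show (0:ℝ) ≤ 22 / 35 * N * φ + (1 - P) by linarith),
        mul_nonneg hφ0.le (show (0:ℝ) ≤ 22 / 35 * N * φ by nlinarith)]
    · nlinarith [mul_nonneg (mul_nonneg (show (0:ℝ) ≤ N + 1 by linarith) hφ0.le)
          (show (0:ℝ) ≤ 11 / 7 - Q by linarith),
        mul_nonneg (show (0:ℝ) ≤ 1 - φ by linarith) (show (0:ℝ) ≤ P - 1 by linarith),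
        mul_nonneg hφ0.le (show (0:ℝ) ≤ 3 / 2 * N - 9 / 7 * (N + 1) by linarith)]

private lemma estE4 (N φ μ P : ℝ) (hN : 10 ≤ N) (hφ0 : 0 < φ) (hφ1 : φ < 1)
    (hφN : φ * (N + 1) ≤ 1) (hμrel : μ * (1 + φ) = 1 - φ)
    (hP0 : 0 < P) (hP7 : P ≤ 11 / 7) :
    |(N + 1) * φ / 2 * (1 - P) + (1 + φ) / 2 * (μ + P)| ≤ 2 := by
  have heq : (N + 1) * φ / 2 * (1 - P) + (1 + φ) / 2 * (μ + P)
      = ((N + 1) * φ + (1 - φ) + P * (1 - N * φ)) / 2 := by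
    linear_combination (1 / 2 : ℝ) * hμrel
  rw [heq]
  have hc0 : 0 < 1 - N * φ := by nlinarith
  rw [abs_le]
  constructor
  · nlinarith [mul_nonneg hP0.le hc0.le]
  · nlinarith [mul_nonneg (show (0:ℝ) ≤ 11 / 7 - P by linarith) hc0.le,
      mul_nonneg hP0.le (show (0:ℝ) ≤ N * φ by positivity)]

private lemma powForm (φ : ℝ) (hφ0 : 0 < φ) (hφ1 : φ < 1)
    (A : Matrix (Fin 2) (Fin 2) ℝ)
    (hA : A = !![(1 + φ ^ 2) / (1 + φ), 1 - (1 + φ ^ 2) / (1 + φ); φ, 1 - φ]) :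
    ∀ k : ℤ, A ^ k = ((1+φ)/2) •
      !![1 + ((1-φ)/(1+φ)) ^ (k+1), (1-φ)/(1+φ) - ((1-φ)/(1+φ)) ^ (k+1);
         1 - ((1-φ)/(1+φ)) ^ k, (1-φ)/(1+φ) + ((1-φ)/(1+φ)) ^ k] := by
  set μ : ℝ := (1-φ)/(1+φ) with hμ
  have h1φ : (0:ℝ) < 1 + φ := by linarith
  have hμ0 : 0 < μ := div_pos (by linarith) h1φ
  have hμne : μ ≠ 0 := ne_of_gt hμ0
  have hdet : A.det = μ := by
    rw [hA, Matrix.det_fin_two_of, hμ]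
    field_simp
    ring
  have hdu : IsUnit A.det := by rw [hdet]; exact (isUnit_iff_ne_zero).2 hμne
  set B : ℤ → Matrix (Fin 2) (Fin 2) ℝ := fun k => ((1+φ)/2) •
      !![1 + μ ^ (k+1), μ - μ ^ (k+1); 1 - μ ^ k, μ + μ ^ k] with hB
  have hstep : ∀ k : ℤ, B k * A = B (k + 1) := by
    intro k
    have e1 : μ ^ (k+1) = μ ^ k * μ := zpow_add_one₀ hμne k
    have e2 : μ ^ (k+1+1) = μ ^ k * μ * μ := by rw [zpow_add_one₀ hμne (k+1), e1]
    rw [hB, hA]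
    simp only [smul_mul, Matrix.mul_fin_two]
    rw [e1, e2]
    congr 1
    ext i j
    fin_cases i <;> fin_cases j <;>
      · simp [hμ]
        field_simp
        ring
  have key : ∀ k : ℤ, A ^ k = B k := by
    intro k
    induction k using Int.induction_on with
    | zero =>
      rw [zpow_zero, hB]
      ext i j
      fin_cases i <;> fin_cases j <;> simp [hμ, Matrix.one_apply] <;> field_simp <;> ring
    | succ i ih =>
      rw [Matrix.zpow_add_one hdu, ih]
      exact hstep i
    | pred i ih =>
      have h1 : A ^ (-(i:ℤ) - 1) = A ^ (-(i:ℤ)) * A⁻¹ := Matrix.zpow_sub_one hdu (-(i:ℤ))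
      have h2 : B (-(i:ℤ) - 1) * A = B (-(i:ℤ)) := by
        have := hstep (-(i:ℤ) - 1); rwa [sub_add_cancel] at this
      rw [h1, ih, ← h2, Matrix.mul_assoc, Matrix.mul_nonsing_inv A hdu, Matrix.mul_one]
  exact key


/-- The matrices B^t = A^t arising in the strongly convex case are "good". -/
theorem stmt4 (n q : ℕ) (hn : 10 ≤ n) (hq : 1 ≤ q)
    (hq1 : (q : ℝ) ≤ ((n : ℝ) - 8) / 12)
    (hq2 : (q : ℝ) ≤ (2 * (n : ℝ) - 4) / 10)
    (hq3 : (q : ℝ) ≤ (n : ℝ) / 20)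
    (φ : ℝ) (hφ0 : 0 < φ) (hφ1 : φ ≤ 1 / ((n : ℝ) + 1))
    (A : Matrix (Fin 2) (Fin 2) ℝ)
    (hA : A = !![(1 + φ ^ 2) / (1 + φ), 1 - (1 + φ ^ 2) / (1 + φ); φ, 1 - φ]) :
    IsUnit A ∧
    ∀ s t : ℕ, |(s : ℤ) - (t : ℤ)| ≤ 2 * q →
      |(A ^ ((t : ℤ) - (s : ℤ) - 1)) 0 0 * (((n : ℝ) + 1) * φ / (1 + φ))
          + (A ^ ((t : ℤ) - (s : ℤ) - 1)) 0 1| ≤ (3 / 2) * (n : ℝ) * φ ∧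
      |(A ^ ((t : ℤ) - (s : ℤ) - 1)) 0 0 * (((n : ℝ) + 1) * φ / (1 + φ))|
          ≤ (3 / 2) * (n : ℝ) * φ ∧
      |(A ^ ((t : ℤ) - (s : ℤ) - 1)) 0 1| ≤ (3 / 2) * (n : ℝ) * φ ∧
      |(A ^ ((t : ℤ) - (s : ℤ) - 1)) 1 0 * (((n : ℝ) + 1) * φ / (1 + φ))
          + (A ^ ((t : ℤ) - (s : ℤ) - 1)) 1 1| ≤ 2 := by
  set N : ℝ := (n : ℝ) with hNdef
  have hN : (10:ℝ) ≤ N := by rw [hNdef]; exact_mod_cast hn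
  have hN1 : (0:ℝ) < N + 1 := by linarith
  have h1φ : (0:ℝ) < 1 + φ := by linarith
  have hφN : φ * (N + 1) ≤ 1 := by
    rw [← le_div_iff₀ hN1]; simpa [one_div] using hφ1
  have hφlt1 : φ < 1 := by nlinarith
  set μ : ℝ := (1 - φ) / (1 + φ) with hμ
  have hμ0 : 0 < μ := div_pos (by linarith) h1φ
  have hμne : μ ≠ 0 := ne_of_gt hμ0
  have hμrel : μ * (1 + φ) = 1 - φ := by rw [hμ]; field_simp
  have hdet : A.det = μ := by
    rw [hA, Matrix.det_fin_two_of, hμ]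
    field_simp
    ring
  have hunit : IsUnit A := by
    rw [Matrix.isUnit_iff_isUnit_det, hdet]
    exact isUnit_iff_ne_zero.2 hμne
  refine ⟨hunit, fun s t hst => ?_⟩
  set k : ℤ := (t : ℤ) - (s : ℤ) - 1 with hk
  have hst' := abs_le.1 hst
  have hkb : |k| ≤ 2 * (q:ℤ) + 1 ∧ |k + 1| ≤ 2 * (q:ℤ) + 1 := by
    constructor <;> rw [abs_le] <;> omega
  have h2q : (2:ℝ) * (q:ℝ) ≤ N / 10 := by linarith
  have hcast : ∀ j : ℤ, |j| ≤ 2 * (q:ℤ) + 1 → |(j:ℝ)| ≤ N / 10 + 1 := by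
    intro j hj
    have : ((|j|:ℤ):ℝ) ≤ ((2 * (q:ℤ) + 1 : ℤ):ℝ) := by exact_mod_cast hj
    rw [Int.cast_abs] at this
    push_cast at this
    linarith
  have hkr := hcast k hkb.1
  have hk1r := hcast (k+1) hkb.2
  obtain ⟨hP0, hP7, hPd, hPle1, hPge1⟩ := zpowBounds N φ μ hN hφ0 hφN hμ k hkr
  obtain ⟨hQ0, hQ7, hQd, hQle1, hQge1⟩ := zpowBounds N φ μ hN hφ0 hφN hμ (k+1) hk1r
  set P : ℝ := μ ^ k with hPdef
  set Q : ℝ := μ ^ (k+1) with hQdef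
  have hPQ : Q = P * μ := by rw [hQdef, hPdef, zpow_add_one₀ hμne]
  have hpf := powForm φ hφ0 hφlt1 A hA k
  rw [← hμ] at hpf
  have h00 : (A ^ k) 0 0 = (1 + φ) / 2 * (1 + Q) := by rw [hpf]; simp; exact Or.inl hQdef.symm
  have h01 : (A ^ k) 0 1 = (1 + φ) / 2 * (μ - Q) := by rw [hpf]; simp; exact Or.inl hQdef.symm
  have h10 : (A ^ k) 1 0 = (1 + φ) / 2 * (1 - P) := by rw [hpf]; simp; exact Or.inl hPdef.symm
  have h11 : (A ^ k) 1 1 = (1 + φ) / 2 * (μ + P) := by rw [hpf]; simp; exact Or.inl hPdef.symm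
  have hc : (1 + φ) / 2 * (1 + Q) * ((N + 1) * φ / (1 + φ)) = (N + 1) * φ / 2 * (1 + Q) := by
    field_simp
  have hc' : (1 + φ) / 2 * (1 - P) * ((N + 1) * φ / (1 + φ)) = (N + 1) * φ / 2 * (1 - P) := by
    field_simp
  have hkNr : |(k:ℝ)| ≤ N / 5 := by linarith
  have hPd' : |P - 1| ≤ 22 / 35 * N * φ := by
    calc |P - 1| ≤ 22 / 7 * |(k:ℝ)| * φ := hPd
    _ ≤ 22 / 7 * (N / 5) * φ := by gcongr
    _ = 22 / 35 * N * φ := by ring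
  refine ⟨?_, ?_, ?_, ?_⟩
  · rw [h00, h01, hc]
    refine estE1 N φ μ P Q hN hφ0 hφlt1 hφN hμrel hPQ hQ0 hQ7 hPd' ?_
    rcases le_or_gt 0 k with hk0 | hk0
    · exact Or.inl ⟨hPle1 hk0, hQle1 (by omega)⟩
    · exact Or.inr (hPge1 (by omega))
  · rw [h00, hc]
    exact estE2 N φ Q hN hφ0 hφN hQ0 hQ7
  · rw [h01]
    exact estE3 N φ μ P Q hN hφ0 hφlt1 hμrel hPQ hPd'
  · rw [h10, h11, hc']
    exact estE4 N φ μ P hN hφ0 hφlt1 hφN hμrel hP0 hP7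
end

section
/- Let n, q ∈ ℕ with n ≥ 10 and 1 ≤ q ≤ min{(n−8)/12, (2n−4)/10, n/20}, and let t₀ ∈ ℝ with t₀ ≥ 2(n+1). For t ∈ ℕ set φ_t := 2/(t₀+t), let A_t be the 2×2 real matrix with first row ((t+t₀−1)/(t+t₀+1), 2/(t+t₀+1)) and second row (0, 1), and define B_0 = I and B_{t+1} = A_t·B_t. Then each A_t (hence each B_t) is invertible, and for all integers s, t ≥ 0 with |s − t| ≤ 2q, writing M := B_t·B_{s+1}⁻¹ and c_s := 2n(t₀+s−1)/((t₀+s)(t₀+s+1)) + 2/(t₀+s+1), the following hold: |M₁₁·c_s + M₁₂| ≤ (3/2)·n·φ_t, |M₁₁·c_s| ≤ (3/2)·n·φ_t, |M₁₂| ≤ (3/2)·n·φ_t, and |M₂₁·c_s + M₂₂| ≤ 2. -/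
set_option maxHeartbeats 1600000 in
/-- The matrices B^t arising in the non-strongly convex case are "good". -/
theorem stmt5 (n q : ℕ) (hn : 10 ≤ n) (hq : 1 ≤ q)
    (hq1 : (q : ℝ) ≤ ((n : ℝ) - 8) / 12)
    (hq2 : (q : ℝ) ≤ (2 * (n : ℝ) - 4) / 10)
    (hq3 : (q : ℝ) ≤ (n : ℝ) / 20)
    (t₀ : ℝ) (ht₀ : 2 * ((n : ℝ) + 1) ≤ t₀)
    (A B : ℕ → Matrix (Fin 2) (Fin 2) ℝ)
    (hA : ∀ t : ℕ, A t = !![((t : ℝ) + t₀ - 1) / ((t : ℝ) + t₀ + 1),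
        2 / ((t : ℝ) + t₀ + 1); 0, 1])
    (hB0 : B 0 = 1) (hBs : ∀ t : ℕ, B (t + 1) = A t * B t) :
    (∀ t : ℕ, IsUnit (A t)) ∧ (∀ t : ℕ, IsUnit (B t)) ∧
    ∀ s t : ℕ, |(s : ℤ) - (t : ℤ)| ≤ 2 * q →
      |(B t * (B (s + 1))⁻¹) 0 0 *
            (2 * (n : ℝ) * (t₀ + (s : ℝ) - 1) / ((t₀ + (s : ℝ)) * (t₀ + (s : ℝ) + 1))
              + 2 / (t₀ + (s : ℝ) + 1))
          + (B t * (B (s + 1))⁻¹) 0 1| ≤ (3 / 2) * (n : ℝ) * (2 / (t₀ + (t : ℝ))) ∧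
      |(B t * (B (s + 1))⁻¹) 0 0 *
            (2 * (n : ℝ) * (t₀ + (s : ℝ) - 1) / ((t₀ + (s : ℝ)) * (t₀ + (s : ℝ) + 1))
              + 2 / (t₀ + (s : ℝ) + 1))| ≤ (3 / 2) * (n : ℝ) * (2 / (t₀ + (t : ℝ))) ∧
      |(B t * (B (s + 1))⁻¹) 0 1| ≤ (3 / 2) * (n : ℝ) * (2 / (t₀ + (t : ℝ))) ∧
      |(B t * (B (s + 1))⁻¹) 1 0 *
            (2 * (n : ℝ) * (t₀ + (s : ℝ) - 1) / ((t₀ + (s : ℝ)) * (t₀ + (s : ℝ) + 1))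
              + 2 / (t₀ + (s : ℝ) + 1))
          + (B t * (B (s + 1))⁻¹) 1 1| ≤ 2 := by
  have hn' : (10 : ℝ) ≤ (n : ℝ) := by exact_mod_cast hn
  have ht22 : (22 : ℝ) ≤ t₀ := by linarith
  set p : ℕ → ℝ := fun t => ((t₀ - 1) * t₀) / (((t : ℝ) + t₀ - 1) * ((t : ℝ) + t₀)) with hp
  have hd1 : ∀ t : ℕ, (0 : ℝ) < (t : ℝ) + t₀ - 1 := fun t => by
    linarith [Nat.cast_nonneg (α := ℝ) t]
  have hd2 : ∀ t : ℕ, (0 : ℝ) < (t : ℝ) + t₀ := fun t => by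
    linarith [Nat.cast_nonneg (α := ℝ) t]
  have hd3 : ∀ t : ℕ, (0 : ℝ) < (t : ℝ) + t₀ + 1 := fun t => by
    linarith [Nat.cast_nonneg (α := ℝ) t]
  have hppos : ∀ t : ℕ, 0 < p t := fun t => by
    exact div_pos (mul_pos (by linarith) (by linarith)) (mul_pos (hd1 t) (hd2 t))
  have hBform : ∀ t : ℕ, B t = !![p t, 1 - p t; 0, 1] := by
    intro t
    induction t with
    | zero =>
      rw [hB0, Matrix.one_fin_two]
      have : p 0 = 1 := by
        simp only [hp, Nat.cast_zero, zero_add]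
        exact div_self (by nlinarith)
      rw [this]; norm_num
    | succ t ih =>
      rw [hBs, hA, ih, Matrix.mul_fin_two]
      have h1 : (0 : ℝ) < (t : ℝ) + t₀ - 1 := hd1 t
      have h2 : (0 : ℝ) < (t : ℝ) + t₀ := hd2 t
      have h3 : (0 : ℝ) < (t : ℝ) + t₀ + 1 := hd3 t
      have e00 : ((t : ℝ) + t₀ - 1) / ((t : ℝ) + t₀ + 1) * p t + 2 / ((t : ℝ) + t₀ + 1) * 0
          = p (t + 1) := by
        simp only [hp]
        push_cast
        have h4 : ((t : ℝ) + 1 + t₀ - 1) ≠ 0 := by linarith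
        have h5 : ((t : ℝ) + 1 + t₀) ≠ 0 := by linarith
        field_simp
        ring
      have e01 : ((t : ℝ) + t₀ - 1) / ((t : ℝ) + t₀ + 1) * (1 - p t)
          + 2 / ((t : ℝ) + t₀ + 1) * 1 = 1 - p (t + 1) := by
        simp only [hp]
        push_cast
        have h4 : ((t : ℝ) + 1 + t₀ - 1) ≠ 0 := by linarith
        have h5 : ((t : ℝ) + 1 + t₀) ≠ 0 := by linarith
        field_simp
        ring
      rw [e00, e01]
      norm_num
  have hAunit : ∀ t : ℕ, IsUnit (A t) := by
    intro t
    rw [hA]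
    rw [Matrix.isUnit_iff_isUnit_det]
    rw [Matrix.det_fin_two_of]
    simp only [mul_one, mul_zero, sub_zero]
    exact (isUnit_iff_ne_zero.mpr (ne_of_gt (div_pos (hd1 t) (hd3 t))))
  have hBunit : ∀ t : ℕ, IsUnit (B t) := by
    intro t
    rw [hBform]
    rw [Matrix.isUnit_iff_isUnit_det]
    rw [Matrix.det_fin_two_of]
    simp only [mul_one, mul_zero, sub_zero]
    exact isUnit_iff_ne_zero.mpr (ne_of_gt (hppos t))
  refine ⟨hAunit, hBunit, ?_⟩
  intro s t hst
  have hBinv : (B (s + 1))⁻¹ = !![1 / p (s + 1), 1 - 1 / p (s + 1); 0, 1] := by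
    apply Matrix.inv_eq_right_inv
    rw [hBform, Matrix.mul_fin_two, Matrix.one_fin_two]
    have hps : p (s + 1) ≠ 0 := ne_of_gt (hppos (s + 1))
    congr 1 <;> field_simp
    ext i j
    fin_cases i <;> fin_cases j <;> simp [hps]
  set T : ℝ := t₀ + (t : ℝ) with hT
  set S : ℝ := t₀ + (s : ℝ) with hS
  have hTpos : (0 : ℝ) < T := by simp only [hT]; linarith [Nat.cast_nonneg (α := ℝ) t]
  have hT1 : (0 : ℝ) < T - 1 := by simp only [hT]; linarith [Nat.cast_nonneg (α := ℝ) t]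
  have hSpos : (0 : ℝ) < S := by simp only [hS]; linarith [Nat.cast_nonneg (α := ℝ) s]
  have hS1 : (0 : ℝ) < S + 1 := by linarith
  have hT2n : 2 * (n : ℝ) + 2 ≤ T := by
    simp only [hT]; linarith [Nat.cast_nonneg (α := ℝ) t]
  have hS2n : 2 * (n : ℝ) + 2 ≤ S := by
    simp only [hS]; linarith [Nat.cast_nonneg (α := ℝ) s]
  have habs : |S - T| ≤ (n : ℝ) / 10 := by
    have h1 : |(s : ℝ) - (t : ℝ)| ≤ 2 * (q : ℝ) := by
      have h0 : ((|(s : ℤ) - (t : ℤ)| : ℤ) : ℝ) ≤ ((2 * q : ℤ) : ℝ) := by exact_mod_cast hst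
      push_cast at h0
      convert h0 using 2
    have h2 : S - T = (s : ℝ) - (t : ℝ) := by simp only [hS, hT]; ring
    rw [h2]
    linarith
  have he1 : S - T ≤ (n : ℝ) / 10 := le_trans (le_abs_self _) habs
  have he2 : T - S ≤ (n : ℝ) / 10 := by
    rw [abs_sub_comm] at habs
    exact le_trans (le_abs_self _) habs
  -- ρ computation
  have hps : p (s + 1) ≠ 0 := ne_of_gt (hppos (s + 1))
  have hpt : p t ≠ 0 := ne_of_gt (hppos t)
  have hrho : p t / p (s + 1) = S * (S + 1) / ((T - 1) * T) := by
    rw [div_eq_div_iff hps (ne_of_gt (mul_pos hT1 hTpos))]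
    simp only [hp, hS, hT]
    push_cast
    have h1 : ((t : ℝ) + t₀ - 1) ≠ 0 := ne_of_gt (hd1 t)
    have h2 : ((t : ℝ) + t₀) ≠ 0 := ne_of_gt (hd2 t)
    have h3 : ((s : ℝ) + 1 + t₀ - 1) ≠ 0 := by
      have := hd1 (s + 1); push_cast at this; linarith
    have h4 : ((s : ℝ) + 1 + t₀) ≠ 0 := by
      have := hd2 (s + 1); push_cast at this; linarith
    field_simp
    ring
  have hM : B t * (B (s + 1))⁻¹
      = !![S * (S + 1) / ((T - 1) * T), 1 - S * (S + 1) / ((T - 1) * T); 0, 1] := by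
    rw [hBform, hBinv, Matrix.mul_fin_two]
    have e0 : p t * (1 / p (s + 1)) = S * (S + 1) / ((T - 1) * T) := by
      rw [← hrho]; field_simp
    have e1 : p t * (1 - 1 / p (s + 1)) + (1 - p t) * 1
        = 1 - S * (S + 1) / ((T - 1) * T) := by
      rw [← hrho]; field_simp; ring
    rw [e0, e1]
    norm_num
  rw [hM]
  set ρ : ℝ := S * (S + 1) / ((T - 1) * T) with hρ
  set c : ℝ := 2 * (n : ℝ) * (S - 1) / (S * (S + 1)) + 2 / (S + 1) with hc
  have hrw : (3 : ℝ) / 2 * (n : ℝ) * (2 / T) = 3 * (n : ℝ) / T := by ring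
  rw [show (!![ρ, 1 - ρ; (0:ℝ), 1]) 0 0 = ρ from rfl,
    show (!![ρ, 1 - ρ; (0:ℝ), 1]) 0 1 = 1 - ρ from rfl,
    show (!![ρ, 1 - ρ; (0:ℝ), 1]) 1 0 = 0 from rfl,
    show (!![ρ, 1 - ρ; (0:ℝ), 1]) 1 1 = 1 from rfl]
  have hden : (0 : ℝ) < (T - 1) * T := mul_pos hT1 hTpos
  have key : ∀ N : ℝ, |N| ≤ 3 * (n : ℝ) * (T - 1) →
      |N / ((T - 1) * T)| ≤ (3 : ℝ) / 2 * (n : ℝ) * (2 / T) := by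
    intro N hN
    rw [hrw, abs_div, abs_of_pos hden, div_le_div_iff₀ hden hTpos]
    nlinarith [abs_nonneg N]
  have hTne : T ≠ 0 := hTpos.ne'
  have hT1ne : T - 1 ≠ 0 := hT1.ne'
  have hSne : S ≠ 0 := hSpos.ne'
  have hS1ne : S + 1 ≠ 0 := hS1.ne'
  clear hM hBinv hBform hBs hB0 hA hrho hps hpt
  clear_value ρ c T S
  have E1 : ρ * c + (1 - ρ)
      = (2 * (n : ℝ) * (S - 1) + T * (T - 1) - S * (S - 1)) / ((T - 1) * T) := by
    simp only [hρ, hc]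
    field_simp
    ring
  have E2 : ρ * c = (2 * (n : ℝ) * (S - 1) + 2 * S) / ((T - 1) * T) := by
    simp only [hρ, hc]
    field_simp
  have E3 : 1 - ρ = (T * (T - 1) - S * (S + 1)) / ((T - 1) * T) := by
    simp only [hρ]
    field_simp
  refine ⟨?_, ?_, ?_, ?_⟩
  · rw [E1]
    apply key
    rw [abs_le]
    constructor
    · nlinarith [mul_le_mul_of_nonneg_right he1 (by linarith : (0:ℝ) ≤ T + S - 1),
        mul_le_mul_of_nonneg_left he2 (by linarith : (0:ℝ) ≤ 2 * (n:ℝ))]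
    · nlinarith [mul_le_mul_of_nonneg_right he2 (by linarith : (0:ℝ) ≤ T + S - 1),
        mul_le_mul_of_nonneg_left he1 (by linarith : (0:ℝ) ≤ 2 * (n:ℝ))]
  · rw [E2]
    apply key
    rw [abs_le]
    constructor
    · nlinarith
    · nlinarith [mul_le_mul_of_nonneg_left he1 (by linarith : (0:ℝ) ≤ 2 * (n:ℝ) + 2)]
  · rw [E3]
    apply key
    rw [abs_le]
    constructor
    · nlinarith [mul_le_mul_of_nonneg_right he1 (by linarith : (0:ℝ) ≤ T + S)]
    · nlinarith [mul_le_mul_of_nonneg_right he2 (by linarith : (0:ℝ) ≤ T + S)]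
  · simp only [zero_mul, zero_add]
    rw [abs_one]
    norm_num
end

section
/- Let m ≥ 1 and for i = 1,…,m let A_i be the 2×2 real matrix with first row (1−e_i, e_i) and second row (f_i, 1−f_i), where 0 ≤ e_i and 0 ≤ f_i. Let p, q ∈ ℝ and let (p', q')ᵀ = A_m···A_1·(p, q)ᵀ. Then: (i) p' − q' = (Π_{i=1}^m (1 − e_i − f_i))·(p − q); (ii) if moreover e_i + f_i ≤ 1 for all i, then min(p,q) ≤ p' ≤ max(p,q) and min(p,q) ≤ q' ≤ max(p,q), and (p'−q')·(p−q) ≥ 0; (iii) in particular, if e_i, f_i ≤ φ_i ≤ 1/2 for all i, then (Π_{i=1}^m (1−2φ_i))·|p−q| ≤ |p'−q'| ≤ |p−q|. -/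
open scoped BigOperators

/-- Products of update matrices [[1-e, e],[f, 1-f]] preserve the order of the two
components, keep them within the interval they span, and contract their difference
by exactly the factor Π(1 - e_i - f_i). -/
theorem stmt6 (m : ℕ) (hm : 1 ≤ m)
    (e f : ℕ → ℝ) (he : ∀ i < m, 0 ≤ e i) (hf : ∀ i < m, 0 ≤ f i)
    (A : ℕ → Matrix (Fin 2) (Fin 2) ℝ)
    (hA : ∀ i < m, A i = !![1 - e i, e i; f i, 1 - f i])
    (p q : ℝ) (v : ℕ → Fin 2 → ℝ)
    (hv0 : v 0 = ![p, q]) (hvs : ∀ i < m, v (i + 1) = (A i).mulVec (v i)) :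
    (v m 0 - v m 1 = (∏ i ∈ Finset.range m, (1 - e i - f i)) * (p - q)) ∧
    ((∀ i < m, e i + f i ≤ 1) →
      min p q ≤ v m 0 ∧ v m 0 ≤ max p q ∧ min p q ≤ v m 1 ∧ v m 1 ≤ max p q ∧
      (v m 0 - v m 1) * (p - q) ≥ 0) ∧
    (∀ φ : ℕ → ℝ, (∀ i < m, e i ≤ φ i ∧ f i ≤ φ i ∧ φ i ≤ 1 / 2) →
      (∏ i ∈ Finset.range m, (1 - 2 * φ i)) * |p - q| ≤ |v m 0 - v m 1| ∧
      |v m 0 - v m 1| ≤ |p - q|) := by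
  have hstep : ∀ n < m, v (n + 1) 0 = (1 - e n) * v n 0 + e n * v n 1 ∧
      v (n + 1) 1 = f n * v n 0 + (1 - f n) * v n 1 := by
    intro n hn
    rw [hvs n hn, hA n hn]
    constructor <;>
      simp [Matrix.mulVec, dotProduct, Fin.sum_univ_two]
  have hdiff : ∀ n ≤ m, v n 0 - v n 1 =
      (∏ i ∈ Finset.range n, (1 - e i - f i)) * (p - q) := by
    intro n hn
    induction n with
    | zero => simp [hv0]
    | succ k ih =>
      have hk : k < m := hn
      have ihk := ih (Nat.le_of_lt hk)
      obtain ⟨h0, h1⟩ := hstep k hk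
      have hd : v (k + 1) 0 - v (k + 1) 1 = (1 - e k - f k) * (v k 0 - v k 1) := by
        rw [h0, h1]; ring
      rw [hd, ihk, Finset.prod_range_succ]; ring
  have hbd : (∀ i < m, e i + f i ≤ 1) → ∀ n ≤ m,
      min p q ≤ v n 0 ∧ v n 0 ≤ max p q ∧ min p q ≤ v n 1 ∧ v n 1 ≤ max p q := by
    intro hef n hn
    induction n with
    | zero =>
      simp [hv0, min_le_left, min_le_right, le_max_left, le_max_right]
    | succ k ih =>
      have hk : k < m := hn
      obtain ⟨i1, i2, i3, i4⟩ := ih (Nat.le_of_lt hk)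
      obtain ⟨h0, h1⟩ := hstep k hk
      have he' := he k hk
      have hf' := hf k hk
      have hef' := hef k hk
      refine ⟨?_, ?_, ?_, ?_⟩
      · rw [h0]; nlinarith
      · rw [h0]; nlinarith
      · rw [h1]; nlinarith
      · rw [h1]; nlinarith
  have hdm := hdiff m le_rfl
  refine ⟨hdm, ?_, ?_⟩
  · intro hef
    obtain ⟨i1, i2, i3, i4⟩ := hbd hef m le_rfl
    refine ⟨i1, i2, i3, i4, ?_⟩
    have hprod : 0 ≤ ∏ i ∈ Finset.range m, (1 - e i - f i) := by
      apply Finset.prod_nonneg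
      intro i hi
      have := hef i (Finset.mem_range.mp hi)
      linarith
    rw [hdm]
    have := mul_nonneg hprod (mul_self_nonneg (p - q))
    nlinarith [this]
  · intro φ hφ
    have hfac : ∀ i ∈ Finset.range m, 0 ≤ 1 - 2 * φ i ∧ 1 - 2 * φ i ≤ 1 - e i - f i
        ∧ 1 - e i - f i ≤ 1 := by
      intro i hi
      have hi' := Finset.mem_range.mp hi
      obtain ⟨a, b, c⟩ := hφ i hi'
      exact ⟨by linarith, by linarith, by linarith [he i hi', hf i hi']⟩
    have hprod0 : 0 ≤ ∏ i ∈ Finset.range m, (1 - e i - f i) :=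
      Finset.prod_nonneg fun i hi => le_trans (hfac i hi).1 (hfac i hi).2.1
    have hle1 : (∏ i ∈ Finset.range m, (1 - e i - f i)) ≤ 1 :=
      Finset.prod_le_one (fun i hi => le_trans (hfac i hi).1 (hfac i hi).2.1)
        (fun i hi => (hfac i hi).2.2)
    have hle2 : (∏ i ∈ Finset.range m, (1 - 2 * φ i)) ≤
        ∏ i ∈ Finset.range m, (1 - e i - f i) :=
      Finset.prod_le_prod (fun i hi => (hfac i hi).1) (fun i hi => (hfac i hi).2.1)
    rw [hdm, abs_mul, abs_of_nonneg hprod0]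
    constructor
    · exact mul_le_mul_of_nonneg_right hle2 (abs_nonneg _)
    · nlinarith [abs_nonneg (p - q)]
end

section
/- Let n ∈ ℕ with n ≥ 2, let τ > 0, let T ∈ ℕ, and let φ_0, …, φ_{T−1} be reals with 0 < φ_t ≤ 1/n and τ·φ_t < 1 for all t. Let F > 0 and suppose Π_{t=0}^{T−1} (1 − φ_t) ≤ F. Then Π_{t=0}^{T−1} (1 − τ·φ_t) ≤ F^{nτ/(n+1)}. -/
open scoped BigOperators

lemma quad_le_exp {x : ℝ} (hx : 0 ≤ x) : 1 + x + x ^ 2 / 2 ≤ Real.exp x := by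
  have h := Real.sum_le_exp_of_nonneg hx 3
  simp [Finset.sum_range_succ] at h
  nlinarith [h]

lemma keyA (n : ℕ) (hn : 2 ≤ n) (x : ℝ) (hx : 0 < x) (hxn : (n : ℝ) * x ≤ 1) :
    Real.exp (-(((n : ℝ) + 1) * x)) ≤ (1 - x) ^ n := by
  have hn2 : (2 : ℝ) ≤ n := by exact_mod_cast hn
  have hx2 : x ≤ 1 / 2 := by nlinarith
  have h1x : (0 : ℝ) < 1 - x := by linarith
  set q : ℝ := 1 + x + x ^ 2 / 2 with hq
  have hq0 : (0 : ℝ) < q := by positivity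
  have hqe : q ≤ Real.exp x := quad_le_exp hx.le
  -- exp ((n+1) x) ≥ q ^ (n+1)
  have hexp : q ^ (n + 1) ≤ Real.exp (((n : ℝ) + 1) * x) := by
    have : Real.exp (((n : ℝ) + 1) * x) = (Real.exp x) ^ (n + 1) := by
      rw [← Real.exp_nat_mul]; push_cast; ring_nf
    rw [this]
    exact pow_le_pow_left₀ hq0.le hqe _
  -- (1-x)^n * q^(n+1) ≥ 1
  have hprod : (1 : ℝ) ≤ (1 - x) ^ n * q ^ (n + 1) := by
    have hfac : (1 - x) ^ n * q ^ (n + 1) = ((1 - x) * q) ^ n * q := by rw [mul_pow, pow_succ]; ring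
    have hr : (1 - x) * q = 1 + (-(x ^ 2 + x ^ 3) / 2) := by rw [hq]; ring
    have hbern : 1 + (n : ℝ) * (-(x ^ 2 + x ^ 3) / 2) ≤ ((1 - x) * q) ^ n := by
      rw [hr]
      apply one_add_mul_le_pow
      nlinarith
    have hnx : (n : ℝ) * (x ^ 2 + x ^ 3) / 2 ≤ (x + x ^ 2) / 2 := by nlinarith
    have hlb : 1 - (x + x ^ 2) / 2 ≤ ((1 - x) * q) ^ n := by nlinarith
    have hfinal : (1 : ℝ) ≤ (1 - (x + x ^ 2) / 2) * q := by rw [hq]; nlinarith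
    have hql : (0:ℝ) < 1 - (x + x ^ 2) / 2 := by nlinarith
    calc (1 : ℝ) ≤ (1 - (x + x ^ 2) / 2) * q := hfinal
      _ ≤ ((1 - x) * q) ^ n * q := by
          apply mul_le_mul_of_nonneg_right hlb hq0.le
      _ = (1 - x) ^ n * q ^ (n + 1) := by rw [mul_pow, pow_succ]; ring
  rw [Real.exp_neg]
  rw [inv_le_iff_one_le_mul₀ (Real.exp_pos _)]
  calc (1 : ℝ) ≤ (1 - x) ^ n * q ^ (n + 1) := hprod
    _ ≤ (1 - x) ^ n * Real.exp (((n : ℝ) + 1) * x) := by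
        apply mul_le_mul_of_nonneg_left hexp (by positivity)

/-- The convergence-rate transfer lemma. -/
theorem stmt9 (n : ℕ) (hn : 2 ≤ n) (τ : ℝ) (hτ : 0 < τ) (T : ℕ)
    (φ : ℕ → ℝ) (hφpos : ∀ t < T, 0 < φ t) (hφub : ∀ t < T, φ t ≤ 1 / (n : ℝ))
    (hτφ : ∀ t < T, τ * φ t < 1)
    (F : ℝ) (hF : 0 < F)
    (h : ∏ t ∈ Finset.range T, (1 - φ t) ≤ F) :
    ∏ t ∈ Finset.range T, (1 - τ * φ t) ≤ F ^ (((n : ℝ) * τ) / ((n : ℝ) + 1)) := by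
  have hn0 : (0 : ℝ) < n := by positivity
  have hn1 : (0 : ℝ) < (n : ℝ) + 1 := by positivity
  set c : ℝ := ((n : ℝ) * τ) / ((n : ℝ) + 1) with hc
  have hc0 : 0 < c := by positivity
  -- pointwise: for each t < T, 1 - τ * φ t ≤ (1 - φ t) ^ c
  have key : ∀ t ∈ Finset.range T, (1 - τ * φ t) ≤ (1 - φ t) ^ c := by
    intro t ht
    rw [Finset.mem_range] at ht
    have hx : 0 < φ t := hφpos t ht
    have hxn : (n : ℝ) * φ t ≤ 1 := by
      have := hφub t ht
      rw [le_div_iff₀ hn0] at this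
      linarith
    have hn2 : (2:ℝ) ≤ n := by exact_mod_cast hn
    have h1x : (0 : ℝ) < 1 - φ t := by nlinarith
    have hA := keyA n hn (φ t) hx hxn
    -- exp(-φ t) ≤ (1-φ t)^(n/(n+1))
    have hB : Real.exp (-(φ t)) ≤ (1 - φ t) ^ ((n : ℝ) / ((n : ℝ) + 1)) := by
      have := Real.rpow_le_rpow (Real.exp_pos _).le hA (by positivity : (0:ℝ) ≤ 1 / ((n:ℝ)+1))
      rw [← Real.exp_mul] at this
      calc Real.exp (-(φ t)) = Real.exp (-(((n : ℝ) + 1) * φ t) * (1 / ((n:ℝ)+1))) := by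
            congr 1; field_simp
        _ ≤ ((1 - φ t) ^ n) ^ (1 / ((n:ℝ)+1)) := this
        _ = (1 - φ t) ^ ((n : ℝ) / ((n : ℝ) + 1)) := by
            rw [← Real.rpow_natCast (1 - φ t) n, ← Real.rpow_mul h1x.le]
            congr 1; field_simp
    calc 1 - τ * φ t ≤ Real.exp (-(τ * φ t)) := by
          have := Real.add_one_le_exp (-(τ * φ t)); linarith
      _ = (Real.exp (-(φ t))) ^ τ := by
          rw [← Real.exp_mul]; congr 1; ring
      _ ≤ ((1 - φ t) ^ ((n : ℝ) / ((n : ℝ) + 1))) ^ τ :=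
          Real.rpow_le_rpow (Real.exp_pos _).le hB hτ.le
      _ = (1 - φ t) ^ c := by
          rw [← Real.rpow_mul h1x.le]; congr 1; rw [hc]; ring
  calc ∏ t ∈ Finset.range T, (1 - τ * φ t)
      ≤ ∏ t ∈ Finset.range T, (1 - φ t) ^ c := by
        apply Finset.prod_le_prod
        · intro t ht
          rw [Finset.mem_range] at ht
          have := hτφ t ht; linarith
        · exact key
    _ = (∏ t ∈ Finset.range T, (1 - φ t)) ^ c := by
        rw [← Real.finset_prod_rpow]
        intro t ht
        rw [Finset.mem_range] at ht
        have hx := hφpos t ht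
        have hxn : (n : ℝ) * φ t ≤ 1 := by
          have := hφub t ht
          rw [le_div_iff₀ hn0] at this
          linarith
        have hn2 : (2:ℝ) ≤ n := by exact_mod_cast hn
        nlinarith
    _ ≤ F ^ c := by
        apply Real.rpow_le_rpow _ h hc0.le
        apply Finset.prod_nonneg
        intro t ht
        rw [Finset.mem_range] at ht
        have hx := hφpos t ht
        have hxn : (n : ℝ) * φ t ≤ 1 := by
          have := hφub t ht
          rw [le_div_iff₀ hn0] at this
          linarith
        have hn2 : (2:ℝ) ≤ n := by exact_mod_cast hn
        nlinarith
end

section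
/- Let n ∈ ℕ with n ≥ 1, and let φ, τ be reals with 0 < φ ≤ 1/n and 0 < τ ≤ 1. Then (1 − φ)·(1 − ((n−2)/3)·φ·(1−τ)) ≤ (1 − τφ)·(1 − (n/3)·φ·(1−τ)). -/
/-- The potential-coefficient inequality in the strongly convex case. -/
theorem stmt13 (n : ℕ) (hn : 1 ≤ n) (φ τ : ℝ)
    (hφ0 : 0 < φ) (hφ1 : φ ≤ 1 / (n : ℝ)) (hτ0 : 0 < τ) (hτ1 : τ ≤ 1) :
    (1 - φ) * (1 - (((n : ℝ) - 2) / 3) * φ * (1 - τ))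
      ≤ (1 - τ * φ) * (1 - ((n : ℝ) / 3) * φ * (1 - τ)) := by
  have hn1 : (1:ℝ) ≤ (n:ℝ) := by exact_mod_cast hn
  have hnφ : (n:ℝ) * φ ≤ 1 := by
    rw [le_div_iff₀ (by linarith)] at hφ1; linarith
  nlinarith [mul_nonneg hφ0.le (sub_nonneg.2 hτ1), mul_pos hφ0 hτ0,
    mul_nonneg (mul_nonneg hφ0.le hφ0.le) (sub_nonneg.2 hτ1),
    mul_nonneg (mul_nonneg hφ0.le hτ0.le) (sub_nonneg.2 hτ1),
    mul_nonneg (mul_nonneg (mul_nonneg hφ0.le hφ0.le) hτ0.le) (sub_nonneg.2 hτ1),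
    mul_le_one₀ hnφ hφ0.le (le_trans hφ1 (by rw [div_le_one (by linarith)]; exact hn1)),
    mul_nonneg (mul_nonneg hφ0.le hφ0.le) (mul_nonneg (sub_nonneg.2 hτ1) (sub_nonneg.2 hnφ))]
end

section
/- Let n ∈ ℕ with n ≥ 1, let t₀ ∈ ℝ with t₀ ≥ 2(n+1), let t ∈ ℕ, and set φ_t := 2/(t₀+t) and φ_{t+1} := 2/(t₀+t+1). Let τ, τ̃ be reals with 0 ≤ τ, τ̃ − τ = 1/4 + 1/(8n), and τ̃ < 1. Then ((1 − τ̃·φ_t)/(1 − τ·φ_t))² ≤ φ_{t+1}/φ_t. -/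
private lemma aux_step2 (e s : ℝ) (he1 : 0 < e) (hs4 : 4 ≤ s)
    (hes : 1/4 + 2*e ≤ e*s) :
    (s - 2*(1/4+e))^2 ≤ 4*(1/4+e)*s*(s - 2 + (1/4+e)) := by
  nlinarith [mul_le_mul_of_nonneg_right hes (by linarith : (0:ℝ) ≤ 4*s),
    mul_nonneg he1.le (by linarith : (0:ℝ) ≤ 3*s - 1),
    mul_nonneg (mul_nonneg he1.le he1.le) (by linarith : (0:ℝ) ≤ s - 1)]

set_option maxHeartbeats 1000000 in
/-- The step-size ratio inequality from the main non-strongly convex theorem. -/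
theorem stmt16 (n : ℕ) (hn : 1 ≤ n) (t₀ : ℝ) (ht₀ : 2 * ((n : ℝ) + 1) ≤ t₀)
    (t : ℕ) (τ τ' : ℝ) (hτ : 0 ≤ τ) (hdiff : τ' - τ = 1 / 4 + 1 / (8 * (n : ℝ)))
    (hτ' : τ' < 1) :
    ((1 - τ' * (2 / (t₀ + (t : ℝ)))) / (1 - τ * (2 / (t₀ + (t : ℝ))))) ^ 2
      ≤ (2 / (t₀ + (t : ℝ) + 1)) / (2 / (t₀ + (t : ℝ))) := by
  have hn' : (1:ℝ) ≤ n := by exact_mod_cast hn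
  set s : ℝ := t₀ + t with hs
  have hsn : 2 * ((n:ℝ) + 1) ≤ s := le_trans ht₀ (le_add_of_nonneg_right (Nat.cast_nonneg t))
  clear_value s
  have hs4 : (4:ℝ) ≤ s := le_trans (by linarith) hsn
  have hspos : (0:ℝ) < s := by linarith
  have hs1 : (0:ℝ) < s + 1 := by linarith
  have hd1 : 1/(8*(n:ℝ)) ≤ 1/8 := by
    apply one_div_le_one_div_of_le <;> linarith
  have hd1' : 0 < 1/(8*(n:ℝ)) := by positivity
  have hd2 : τ' - τ ≤ 3/8 := by rw [hdiff]; linarith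
  have hd3 : 1/4 < τ' - τ := by rw [hdiff]; linarith
  have hττ : τ < τ' := by linarith
  have hτ'pos : 0 < τ' := lt_of_le_of_lt hτ hττ
  have hA : 0 < 1 - τ' * (2 / s) := by
    rw [sub_pos]
    have h2s : 2/s ≤ 1/2 := by rw [div_le_div_iff₀ hspos (by norm_num)]; linarith
    nlinarith [mul_le_mul (le_of_lt hτ') h2s (by positivity : (0:ℝ) ≤ 2/s) (by norm_num : (0:ℝ) ≤ 1)]
  have hB : 0 < 1 - τ * (2 / s) := by
    rw [sub_pos]
    have h2s : 2/s ≤ 1/2 := by rw [div_le_div_iff₀ hspos (by norm_num)]; linarith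
    nlinarith [mul_le_mul (by linarith : τ ≤ 1) h2s (by positivity : (0:ℝ) ≤ 2/s) (by norm_num : (0:ℝ) ≤ 1)]
  -- chain
  have step1 : (s - 2*τ')^2 ≤ (s - 2*(τ'-τ))^2 := by
    nlinarith [mul_nonneg hτ (show (0:ℝ) ≤ s - τ' - (τ'-τ) by linarith)]
  have step2 : (s - 2*(τ'-τ))^2 ≤ 4*(τ'-τ)*s*(s - 2 + (τ'-τ)) := by
    rw [hdiff]
    refine aux_step2 _ _ hd1' hs4 ?_
    have h8 : 8*(n:ℝ) ≤ 4*(s-2) := by linarith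
    have h0 : 1/(8*(n:ℝ)) * (8*(n:ℝ)) = 1 := by field_simp
    nlinarith [mul_le_mul_of_nonneg_left h8 hd1'.le]
  have step3 : 4*(τ'-τ)*s*(s - 2 + (τ'-τ)) ≤ 4*(τ'-τ)*s*(s - τ - τ') := by
    have hpos : (0:ℝ) ≤ 4*(τ'-τ)*s := by
      have : (0:ℝ) ≤ τ'-τ := by linarith
      positivity
    exact mul_le_mul_of_nonneg_left (by linarith) hpos
  have hchain : (s - 2*τ')^2 ≤ 4*(τ'-τ)*s*(s - τ - τ') := le_trans step1 (le_trans step2 step3)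
  have key : (s + 1) * (s - 2*τ')^2 ≤ s * (s - 2*τ)^2 := by
    have hid : s * (s - 2*τ)^2 - (s + 1) * (s - 2*τ')^2
        = 4*(τ'-τ)*s*(s - τ - τ') - (s - 2*τ')^2 := by ring
    linarith
  have hAs : 0 < s - 2*τ' := by linarith
  have hBs : 0 < s - 2*τ := by linarith
  have e1 : 1 - τ' * (2/s) = (s - 2*τ')/s := by field_simp
  have e2 : 1 - τ * (2/s) = (s - 2*τ)/s := by field_simp
  have e3 : (s - 2*τ')/s / ((s - 2*τ)/s) = (s - 2*τ')/(s - 2*τ) := by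
    rw [div_div_div_comm, div_self hspos.ne']
    exact div_one _
  have hrhs : (2 / (s + 1)) / (2 / s) = s / (s + 1) := by
    field_simp
  rw [e1, e2, e3, hrhs, div_pow, div_le_div_iff₀ (pow_pos hBs 2) hs1]
  nlinarith [key]
end

section
/- Let n ∈ ℕ with n ≥ 10, and let φ : ℕ → ℝ satisfy 0 < φ_l ≤ 1/n and φ_{l+1} ≥ (1 − 1/(2n))·φ_l for all l. Then for all integers s < t with t − s ≤ n/10: Π_{l=s+1}^{t−1} (1 − 2·φ_l) ≥ 1 − (1/4)·n·φ_t. -/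
open scoped BigOperators

/-- Weierstrass: `1 - ∑ a ≤ ∏ (1 - a)` for `a i ∈ [0,1]`. -/
lemma weier (s : Finset ℕ) (a : ℕ → ℝ) (h0 : ∀ i ∈ s, 0 ≤ a i) (h1 : ∀ i ∈ s, a i ≤ 1) :
    1 - ∑ i ∈ s, a i ≤ ∏ i ∈ s, (1 - a i) := by
  induction s using Finset.induction_on with
  | empty => simp
  | @insert x s hx ih =>
    rw [Finset.sum_insert hx, Finset.prod_insert hx]
    have h0' : ∀ i ∈ s, 0 ≤ a i := fun i hi => h0 i (Finset.mem_insert_of_mem hi)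
    have h1' : ∀ i ∈ s, a i ≤ 1 := fun i hi => h1 i (Finset.mem_insert_of_mem hi)
    have hax0 : 0 ≤ a x := h0 x (Finset.mem_insert_self x s)
    have hax1 : a x ≤ 1 := h1 x (Finset.mem_insert_self x s)
    have hsum : 0 ≤ ∑ i ∈ s, a i := Finset.sum_nonneg h0'
    have := ih h0' h1'
    nlinarith [this]

/-- The product lower bound from Case 2 of the proof that the matrices B^t are good. -/
theorem stmt18 (n : ℕ) (hn : 10 ≤ n) (φ : ℕ → ℝ)
    (hpos : ∀ l, 0 < φ l) (hub : ∀ l, φ l ≤ 1 / (n : ℝ))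
    (hratio : ∀ l, φ (l + 1) ≥ (1 - 1 / (2 * (n : ℝ))) * φ l) :
    ∀ s t : ℕ, s < t → ((t : ℝ) - (s : ℝ)) ≤ (n : ℝ) / 10 →
      1 - (1 / 4) * (n : ℝ) * φ t ≤ ∏ l ∈ Finset.Ico (s + 1) t, (1 - 2 * φ l) := by
  intro s t hst hwin
  have hn' : (10 : ℝ) ≤ (n : ℝ) := by exact_mod_cast hn
  have hn0 : (0 : ℝ) < n := by linarith
  have hc : (0 : ℝ) < 1 - 1 / (2 * (n : ℝ)) := by
    have : 1 / (2 * (n : ℝ)) ≤ 1 / 20 := by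
      apply div_le_div_of_nonneg_left (by norm_num) (by norm_num) (by linarith)
    linarith
  -- φ l ≤ (1 - 1/(2n))^{-(k)} φ (l+k), i.e. (1-1/(2n))^k * φ l ≤ φ (l+k)
  have key : ∀ k l, (1 - 1 / (2 * (n : ℝ)))^k * φ l ≤ φ (l + k) := by
    intro k
    induction k with
    | zero => intro l; simp
    | succ k ih =>
      intro l
      have h1 := hratio (l + k)
      have h2 := ih l
      calc (1 - 1 / (2 * (n : ℝ)))^(k+1) * φ l
          = (1 - 1 / (2 * (n : ℝ))) * ((1 - 1 / (2 * (n : ℝ)))^k * φ l) := by ring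
        _ ≤ (1 - 1 / (2 * (n : ℝ))) * φ (l + k) := by
            exact mul_le_mul_of_nonneg_left h2 (le_of_lt hc)
        _ ≤ φ (l + k + 1) := h1
  set c : ℝ := 1 - 1 / (2 * (n : ℝ)) with hcdef
  set m : ℕ := t - s - 1 with hm
  have hmR : (m : ℝ) ≤ (n : ℝ) / 10 - 1 := by
    have : (m : ℝ) = (t : ℝ) - (s : ℝ) - 1 := by
      have h1 : s + 1 ≤ t := hst
      have : m = t - (s + 1) := by omega
      rw [this]
      push_cast [Nat.cast_sub h1]
      ring
    linarith
  -- c^m ≥ 1 - m/(2n) ≥ 4/5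
  have hcm : (4 : ℝ) / 5 ≤ c ^ m := by
    have hb : 1 + (m : ℝ) * (-(1 / (2 * (n : ℝ)))) ≤ (1 + (-(1 / (2 * (n : ℝ)))))^m := by
      apply one_add_mul_le_pow
      have : 1 / (2 * (n : ℝ)) ≤ 1 / 20 := by
        apply div_le_div_of_nonneg_left (by norm_num) (by norm_num) (by linarith)
      linarith
    have hcm' : c ^ m = (1 + (-(1 / (2 * (n : ℝ)))))^m := by rw [hcdef]; ring_nf
    rw [hcm']
    have hmn : (m : ℝ) / (2 * n) ≤ 1 / 5 := by
      rw [div_le_iff₀ (by linarith)]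
      linarith
    have : (m : ℝ) * (1 / (2 * (n : ℝ))) ≤ 1 / 5 := by
      rw [mul_one_div]; exact hmn
    nlinarith
  -- each l in Ico (s+1) t: φ l ≤ φ t / c^m  (since c^{t-l} φ l ≤ φ t, t-l ≤ m, c ≤ 1)
  have hcm0 : (0 : ℝ) < c ^ m := by linarith
  have hφl : ∀ l ∈ Finset.Ico (s + 1) t, φ l ≤ φ t / c ^ m := by
    intro l hl
    rw [Finset.mem_Ico] at hl
    have hk : l + (t - l) = t := by omega
    have h1 : c ^ (t - l) * φ l ≤ φ t := by
      have := key (t - l) l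
      rwa [hk] at this
    have hle : t - l ≤ m := by omega
    have hc1 : c ≤ 1 := by
      rw [hcdef]
      have : 0 < 1 / (2 * (n : ℝ)) := by positivity
      linarith
    have hpow : c ^ m ≤ c ^ (t - l) := pow_le_pow_of_le_one (le_of_lt hc) hc1 hle
    rw [le_div_iff₀ hcm0]
    calc φ l * c ^ m ≤ φ l * c ^ (t - l) := by
          exact mul_le_mul_of_nonneg_left hpow (le_of_lt (hpos l))
      _ = c ^ (t - l) * φ l := by ring
      _ ≤ φ t := h1
  -- apply Weierstrass to a l = 2 φ l
  have hcard : (Finset.Ico (s + 1) t).card = m := by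
    rw [Nat.card_Ico]; omega
  have hW := weier (Finset.Ico (s + 1) t) (fun l => 2 * φ l)
    (fun i _ => by have := hpos i; show 0 ≤ 2 * φ i; linarith)
    (fun i _ => by
      show 2 * φ i ≤ 1
      have h1 := hub i
      have : (1 : ℝ) / n ≤ 1 / 10 := by
        apply div_le_div_of_nonneg_left (by norm_num) (by norm_num) hn'
      linarith)
  refine le_trans ?_ hW
  have hsum : ∑ l ∈ Finset.Ico (s + 1) t, 2 * φ l ≤ (m : ℝ) * (2 * (φ t / c ^ m)) := by
    calc ∑ l ∈ Finset.Ico (s + 1) t, 2 * φ l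
        ≤ ∑ l ∈ Finset.Ico (s + 1) t, 2 * (φ t / c ^ m) := by
          apply Finset.sum_le_sum
          intro i hi
          have := hφl i hi
          linarith
      _ = (m : ℝ) * (2 * (φ t / c ^ m)) := by
          rw [Finset.sum_const, hcard, nsmul_eq_mul]
  have hφt := hpos t
  -- m * 2 * φ t / c^m ≤ (1/4) n φ t  since m ≤ n/10 - 1, c^m ≥ 4/5
  have hfinal : (m : ℝ) * (2 * (φ t / c ^ m)) ≤ (1 / 4) * (n : ℝ) * φ t := by
    rw [div_eq_mul_inv]
    have hinv : (c ^ m)⁻¹ ≤ 5 / 4 := by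
      rw [inv_le_comm₀ (by positivity) (by norm_num)]
      linarith
    have hm0 : (0 : ℝ) ≤ m := Nat.cast_nonneg m
    have : (m : ℝ) * (2 * (φ t * (c ^ m)⁻¹)) ≤ (m : ℝ) * (2 * (φ t * (5 / 4))) := by
      apply mul_le_mul_of_nonneg_left _ hm0
      apply mul_le_mul_of_nonneg_left _ (by norm_num)
      exact mul_le_mul_of_nonneg_left hinv (le_of_lt hφt)
    nlinarith
  linarith
end
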